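/- arXiv:2304.06450 — 3 statements merged into one kernel-verified Lean document; each statement's English description precedes it below -/
import Mathlib

section
/- The composite of strong extensions of partial K-powered fields is strong: if D₀ ◁ D₁ and D₁ ◁ D₂, then D₀ ◁ D₂. -/
open Set Submodule

/-- Relative linear dimension: the dimension of the span of `A ∪ B` modulo the span of `B`. -/
noncomputable def ldim (R : Type*) [DivisionRing R] {V : Type*} [AddCommGroup V] [Module R V]
    (A B : Set V) : ℕ :=
  Module.finrank R (↥(span R (A ∪ B)) ⧸ (span R B).comap (span R (A ∪ B)).subtype)

/-- Relative transcendence degree of `A` over (the field generated by) `B`. -/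
noncomputable def td {F : Type*} [Field F] [CharZero F] (A B : Set F) : ℕ :=
  sSup {n : ℕ | ∃ s : Fin n → F, (∀ i, s i ∈ A) ∧
    AlgebraicIndependent (Algebra.adjoin ℚ B) s}

/-- A partial K-powered field: a ℚ-subspace `D` of a `K`-vector space `V` together with a
partial exponential group homomorphism into `Fˣ`, such that `D` `K`-spans `V` and
`exp(D)` generates `F` as a field. -/
structure PPF (K : Type) [Field K] [CharZero K] where
  V : Type
  F : Type
  [addV : AddCommGroup V]
  [modK : Module K V]
  [modQ : Module ℚ V]
  [fieldF : Field F]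
  [charF : CharZero F]
  D : Submodule ℚ V
  exp : V → F
  exp_ne_zero : ∀ x ∈ D, exp x ≠ 0
  exp_add : ∀ x ∈ D, ∀ y ∈ D, exp (x + y) = exp x * exp y
  spans : span K (D : Set V) = ⊤
  generates : Subfield.closure (exp '' D) = ⊤

attribute [instance] PPF.addV PPF.modK PPF.modQ PPF.fieldF PPF.charF

variable {K : Type} [Field K] [CharZero K]

/-- The predimension δ(A/B) = ldim_K(A/B) + td(exp A / exp B) − ldim_ℚ(A/B). -/
noncomputable def PPF.delta (P : PPF K) (A B : Set P.V) : ℤ :=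
  (ldim K A B : ℤ) + (td (P.exp '' A) (P.exp '' B) : ℤ) - (ldim ℚ A B : ℤ)

/-- A subset is strong in `P` if every finite tuple from the domain `D` has
nonnegative predimension over it. -/
def PPF.StrongIn (P : PPF K) (S : Set P.V) : Prop :=
  ∀ (n : ℕ) (z : Fin n → P.V), (∀ i, z i ∈ P.D) → 0 ≤ P.delta (Set.range z) S

/-- A strong extension `D₀ ◁ D₁` of sub-partial-K-powered fields of `P`:
kernel-preserving, and every finite tuple from `D₁` has nonnegative predimension over `D₀`. -/
def PPF.StrongExt (P : PPF K) (D₀ D₁ : Submodule ℚ P.V) : Prop :=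
  D₀ ≤ D₁ ∧ D₁ ≤ P.D ∧ (∀ x ∈ D₁, P.exp x = 1 → x ∈ D₀) ∧
    ∀ (n : ℕ) (z : Fin n → P.V), (∀ i, z i ∈ D₁) → 0 ≤ P.delta (Set.range z) (D₀ : Set P.V)

/-- The K-powers closure of `A` inside the sub-powered-field `E` of `P`. -/
def PPF.pclIn (P : PPF K) (E : Submodule ℚ P.V) (A : Set P.V) : Submodule ℚ P.V :=
  sInf {S | A ⊆ S ∧ S ≤ E ∧ ∀ (n : ℕ) (z : Fin n → P.V), (∀ i, z i ∈ E) →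
      P.delta (Set.range z) (S : Set P.V) ≤ 0 → ∀ i, z i ∈ S}

/-- Powers-transcendence degree of `A` over `B`, computed in the sub-powered-field `E` of `P`:
the least size of a tuple from `E` whose adjunction to `B` captures `A` in the closure. -/
noncomputable def PPF.ktdIn (P : PPF K) (E : Submodule ℚ P.V) (A B : Set P.V) : ℕ :=
  sInf {m | ∃ s : Fin m → P.V, (∀ i, s i ∈ E) ∧ A ⊆ P.pclIn E (B ∪ Set.range s)}

/-- `S` is a purely powers-transcendental extension of `D₀` inside `P`: every finite tuple
from `S` not entirely contained in `D₀` has strictly positive predimension over `D₀`. -/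
def PPF.PPT (P : PPF K) (D₀ S : Submodule ℚ P.V) : Prop :=
  D₀ ≤ S ∧ ∀ (n : ℕ) (z : Fin n → P.V), (∀ i, z i ∈ S) → (∃ i, z i ∉ D₀) →
    0 < P.delta (Set.range z) (D₀ : Set P.V)

/-- The subfield of `F` generated by the exponentials of `S`. -/
def PPF.fieldOf (P : PPF K) (S : Submodule ℚ P.V) : Subfield P.F :=
  Subfield.closure (P.exp '' S)

/-- The sub-powered-field `S` of `P` is full: exp maps `S` onto the nonzero elements of its
field, and its field is (relatively) algebraically closed. -/
def PPF.FullSub (P : PPF K) (S : Submodule ℚ P.V) : Prop :=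
  S ≤ P.D ∧ (∀ y ∈ P.fieldOf S, y ≠ 0 → ∃ x ∈ S, P.exp x = y) ∧
    ∀ y : P.F, (∃ p : Polynomial P.F, p ≠ 0 ∧ (∀ i, p.coeff i ∈ P.fieldOf S) ∧
      Polynomial.eval y p = 0) → y ∈ P.fieldOf S

/-- `(eV, eF)` is an isomorphism, over the base `D₀`, between the sub-partial-K-powered fields
of `P` generated by `D₂` and `D₃`: `eV` is a `K`-linear bijection of the vector-space parts
mapping `D₂` onto `D₃` and fixing `D₀`, `eF` is a field isomorphism of the field parts fixing
the field of `D₀`, and the pair commutes with exp. -/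
def PPF.IsIsoOver (P : PPF K) (D₂ D₃ D₀ : Submodule ℚ P.V)
    (eV : P.V → P.V) (eF : P.F → P.F) : Prop :=
  Set.BijOn eV (span K (D₂ : Set P.V) : Set P.V) (span K (D₃ : Set P.V)) ∧
  Set.BijOn eV (D₂ : Set P.V) (D₃ : Set P.V) ∧
  (∀ x y : P.V, x ∈ span K (D₂ : Set P.V) → y ∈ span K (D₂ : Set P.V) →
    eV (x + y) = eV x + eV y) ∧
  (∀ (c : K) (x : P.V), x ∈ span K (D₂ : Set P.V) → eV (c • x) = c • eV x) ∧
  (∀ x ∈ D₀, eV x = x) ∧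
  Set.BijOn eF (P.fieldOf D₂ : Set P.F) (P.fieldOf D₃ : Set P.F) ∧
  (∀ x y : P.F, x ∈ P.fieldOf D₂ → y ∈ P.fieldOf D₂ → eF (x + y) = eF x + eF y) ∧
  (∀ x y : P.F, x ∈ P.fieldOf D₂ → y ∈ P.fieldOf D₂ → eF (x * y) = eF x * eF y) ∧
  (∀ x ∈ D₀, eF (P.exp x) = P.exp x) ∧
  (∀ x ∈ D₂, eF (P.exp x) = P.exp (eV x))


open Set Submodule

section Transfer

variable {F : Type*} [Field F]

/-- Transfer algebraic independence down along a compatible ring hom. -/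
theorem myAI.down {R S : Type*} [CommRing R] [CommRing S] [Algebra R F] [Algebra S F]
    (f : R →+* S) (hf : ∀ r, algebraMap S F (f r) = algebraMap R F r)
    (hinj : Function.Injective (algebraMap R F))
    {ι : Type*} {v : ι → F} (h : AlgebraicIndependent S v) : AlgebraicIndependent R v := by
  refine AlgebraicIndependent.of_ringHom_of_comp_eq f (RingHom.id F) (by simpa using h) ?_ ?_
  · intro a b hab
    apply hinj
    rw [← hf, ← hf b, hab]
  · ext r
    simp [hf]

/-- Transfer algebraicity up along a compatible ring hom. -/
theorem myAlg.up {R S : Type*} [CommRing R] [CommRing S] [Algebra R F] [Algebra S F]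
    (f : R →+* S) (hf : ∀ r, algebraMap S F (f r) = algebraMap R F r)
    {x : F} (h : IsAlgebraic R x) (hinjR : Function.Injective (algebraMap R F)) :
    IsAlgebraic S x := by
  obtain ⟨p, hp, he⟩ := h
  have hcomp : (algebraMap S F).comp f = algebraMap R F := RingHom.ext hf
  have hfinj : Function.Injective f := by
    intro a b hab
    apply hinjR
    rw [← hf, ← hf b, hab]
  refine ⟨p.map f, fun h0 => hp ?_, ?_⟩
  · exact (Polynomial.map_injective f hfinj) (by simpa using h0)
  · rw [Polynomial.aeval_def, Polynomial.eval₂_map, hcomp, ← Polynomial.aeval_def]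
    exact he

/-- Transfer transcendence down along a compatible ring hom. -/
theorem myTrans.down {R S : Type*} [CommRing R] [CommRing S] [Algebra R F] [Algebra S F]
    (f : R →+* S) (hf : ∀ r, algebraMap S F (f r) = algebraMap R F r)
    {x : F} (h : Transcendental S x) (hinjR : Function.Injective (algebraMap R F)) :
    Transcendental R x := fun halg => h (myAlg.up f hf halg hinjR)

end Transfer

section Frac

variable {F : Type*} [Field F]

/-- Algebraic independence over the generated subring implies algebraic independence over the
generated subfield (clearing denominators). -/
theorem myAI.toField {k : Type*} [Field k] [Algebra k F] (S : Set F) {ι : Type*} {v : ι → F}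
    (h : AlgebraicIndependent ↥(Algebra.adjoin k S) v) :
    AlgebraicIndependent ↥(IntermediateField.adjoin k S) v := by
  classical
  set R := Algebra.adjoin k S with hR
  set K := IntermediateField.adjoin k S with hK
  rw [algebraicIndependent_iff] at h ⊢
  intro p hp
  by_contra hne
  set cf : (ι →₀ ℕ) → F := fun m => ((MvPolynomial.coeff m p : ↥K) : F) with hcf
  have key : ∀ m : ι →₀ ℕ, ∃ nd : F × F, nd.1 ∈ R ∧ nd.2 ∈ R ∧ nd.2 ≠ 0 ∧
      (cf m * nd.2 = nd.1) := by
    intro m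
    have hm : cf m ∈ K := (MvPolynomial.coeff m p).2
    rw [hK, IntermediateField.mem_adjoin_iff] at hm
    obtain ⟨r, s, hrs⟩ := hm
    have haev : ∀ t : MvPolynomial S k, (MvPolynomial.aeval (Subtype.val : S → F)) t ∈ R := by
      intro t
      have h1 : (MvPolynomial.aeval (Subtype.val : S → F)) t ∈
          Algebra.adjoin k (Set.range (Subtype.val : S → F)) := by
        rw [Algebra.adjoin_range_eq_range_aeval]
        exact ⟨t, rfl⟩
      rwa [Subtype.range_coe] at h1
    have hmemr := haev r
    have hmems := haev s
    by_cases hs : (MvPolynomial.aeval (Subtype.val : S → F)) s = 0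
    · exact ⟨(0, 1), zero_mem _, one_mem _, one_ne_zero, by simp [hrs, hs]⟩
    · exact ⟨(_, _), hmemr, hmems, hs, by rw [hrs, div_mul_cancel₀ _ hs]⟩
  choose nd h1 h2 h3 h4 using key
  set d : F := ∏ m ∈ p.support, (nd m).2 with hd
  have hdR : d ∈ R := Subalgebra.prod_mem _ (fun m _ => h2 m)
  have hdne : d ≠ 0 := Finset.prod_ne_zero_iff.2 (fun m _ => h3 m)
  have hmem : ∀ m ∈ p.support, cf m * d ∈ R := by
    intro m hm
    have : cf m * d = (nd m).1 * ∏ m' ∈ p.support.erase m, (nd m').2 := by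
      rw [hd, ← Finset.mul_prod_erase _ _ hm, ← mul_assoc, h4 m]
    rw [this]
    exact mul_mem (h1 m) (Subalgebra.prod_mem _ (fun m' _ => h2 m'))
  set q : MvPolynomial ι ↥R :=
    ∑ m ∈ p.support.attach, MvPolynomial.monomial (m : ι →₀ ℕ) (⟨_, hmem m m.2⟩ : ↥R) with hq
  have hqv : MvPolynomial.aeval v q = 0 := by
    rw [hq, map_sum]
    have : ∀ m ∈ p.support.attach,
        MvPolynomial.aeval v (MvPolynomial.monomial (m : ι →₀ ℕ) (⟨_, hmem m m.2⟩ : ↥R))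
          = d * ((algebraMap ↥K F (p.coeff m)) *
              (m : ι →₀ ℕ).prod fun i k => v i ^ k) := by
      intro m _
      rw [MvPolynomial.aeval_monomial]
      show (cf (m : ι →₀ ℕ) * d) * ((m : ι →₀ ℕ).prod fun i k => v i ^ k)
          = d * (cf (m : ι →₀ ℕ) * (m : ι →₀ ℕ).prod fun i k => v i ^ k)
      ring
    rw [Finset.sum_congr rfl this, ← Finset.mul_sum]
    have hpv : (MvPolynomial.aeval v) p = ∑ m ∈ p.support.attach,
        (algebraMap ↥K F (p.coeff m)) * (m : ι →₀ ℕ).prod fun i k => v i ^ k := by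
      conv_lhs => rw [p.as_sum]
      rw [map_sum, ← Finset.sum_attach p.support
        (fun m => (MvPolynomial.aeval v) (MvPolynomial.monomial m (p.coeff m)))]
      exact Finset.sum_congr rfl (fun m _ => MvPolynomial.aeval_monomial _ _ _)
    rw [← hpv, hp, mul_zero]
  have hq0 := h q hqv
  obtain ⟨m₀, hm₀⟩ := MvPolynomial.support_nonempty.2 hne
  have : q.coeff m₀ = ⟨_, hmem m₀ hm₀⟩ := by
    rw [hq, MvPolynomial.coeff_sum]
    rw [Finset.sum_eq_single (⟨m₀, hm₀⟩ : {x // x ∈ p.support})]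
    · simp [MvPolynomial.coeff_monomial]
    · intro b _ hb
      rw [MvPolynomial.coeff_monomial, if_neg]
      intro hh
      exact hb (Subtype.ext hh)
    · intro hnot
      exact absurd (Finset.mem_attach _ _) hnot
  rw [hq0] at this
  have : cf m₀ * d = 0 := by
    have := this.symm
    rwa [MvPolynomial.coeff_zero, Subtype.ext_iff] at this
  have : cf m₀ = 0 := by
    rcases mul_eq_zero.1 this with h' | h'
    · exact h'
    · exact absurd h' hdne
  exact absurd (ZeroMemClass.coe_eq_zero.mp this) (MvPolynomial.mem_support_iff.1 hm₀)

end Frac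


section Concat

variable {F : Type*} [Field F]

theorem myAI.sum_iff {R : Type*} [CommRing R] [Algebra R F] {ι κ : Type*}
    {x : ι → F} (hx : AlgebraicIndependent R x) (y : κ → F) :
    AlgebraicIndependent (↥(Algebra.adjoin R (Set.range x))) y ↔
      AlgebraicIndependent R (Sum.elim y x) := by
  classical
  set A := Algebra.adjoin R (Set.range x) with hA
  set e1 : MvPolynomial (κ ⊕ ι) R ≃ₐ[R] MvPolynomial κ (MvPolynomial ι R) :=
    MvPolynomial.sumAlgEquiv R κ ι with he1
  set er : MvPolynomial (κ ⊕ ι) R →+* MvPolynomial κ (MvPolynomial ι R) :=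
    e1.toAlgHom.toRingHom with her
  set φ : MvPolynomial κ (MvPolynomial ι R) →+* MvPolynomial κ ↥A :=
    MvPolynomial.map (hx.aevalEquiv.toAlgHom.toRingHom) with hφ
  have hφinj : Function.Injective φ :=
    MvPolynomial.map_injective _ hx.aevalEquiv.injective
  have hφsurj : Function.Surjective φ :=
    MvPolynomial.map_surjective _ hx.aevalEquiv.surjective
  have hcomp : ((MvPolynomial.aeval y : MvPolynomial κ ↥A →ₐ[↥A] F).toRingHom.comp
      (φ.comp er)) =
      (MvPolynomial.aeval (Sum.elim y x) : MvPolynomial (κ ⊕ ι) R →ₐ[R] F).toRingHom := by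
    apply MvPolynomial.ringHom_ext
    · intro r
      simp only [RingHom.coe_comp, Function.comp_apply, AlgHom.toRingHom_eq_coe,
        RingHom.coe_coe]
      have h1 : er (MvPolynomial.C r)
          = MvPolynomial.C (MvPolynomial.C r) := by
        show e1 (MvPolynomial.C r) = _
        rw [show (MvPolynomial.C r : MvPolynomial (κ ⊕ ι) R) = algebraMap R _ r from rfl,
          AlgEquiv.commutes]
        rfl
      rw [h1, MvPolynomial.map_C, MvPolynomial.aeval_C, MvPolynomial.aeval_C]
      have h2 : (hx.aevalEquiv.toAlgHom.toRingHom) (MvPolynomial.C r) = algebraMap R ↥A r := by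
        show hx.aevalEquiv (MvPolynomial.C r) = _
        rw [show (MvPolynomial.C r : MvPolynomial ι R) = algebraMap R _ r from rfl,
          AlgEquiv.commutes]
      rw [h2]
      exact (IsScalarTower.algebraMap_apply R ↥A F r).symm
    · rintro (j | i)
      · simp only [RingHom.coe_comp, Function.comp_apply, AlgHom.toRingHom_eq_coe,
          RingHom.coe_coe]
        have h1 : er (MvPolynomial.X (Sum.inl j))
            = MvPolynomial.X j := by
          show e1 (MvPolynomial.X (Sum.inl j)) = _
          exact MvPolynomial.sumAlgEquiv_X_inl R κ ι j
        rw [h1, MvPolynomial.map_X, MvPolynomial.aeval_X]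
        simp
      · simp only [RingHom.coe_comp, Function.comp_apply, AlgHom.toRingHom_eq_coe,
          RingHom.coe_coe]
        have h1 : er (MvPolynomial.X (Sum.inr i))
            = MvPolynomial.C (MvPolynomial.X i) := by
          show e1 (MvPolynomial.X (Sum.inr i)) = _
          exact MvPolynomial.sumAlgEquiv_X_inr R κ ι i
        rw [h1, MvPolynomial.map_C, MvPolynomial.aeval_C, MvPolynomial.aeval_X]
        have h2 : algebraMap ↥A F (hx.aevalEquiv (MvPolynomial.X i)) = x i := by
          rw [hx.algebraMap_aevalEquiv, MvPolynomial.aeval_X]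
        simpa using h2
  have hfun : ∀ p : MvPolynomial (κ ⊕ ι) R,
      MvPolynomial.aeval y (φ (e1 p)) = MvPolynomial.aeval (Sum.elim y x) p := by
    intro p
    have := congrArg (fun (g : MvPolynomial (κ ⊕ ι) R →+* F) => g p) hcomp
    exact this
  constructor
  · intro hy
    rw [algebraicIndependent_iff_injective_aeval]
    intro p q hpq
    have h2 : MvPolynomial.aeval y (φ (e1 p)) = MvPolynomial.aeval y (φ (e1 q)) := by
      rw [hfun, hfun]; exact hpq
    have h3 := (algebraicIndependent_iff_injective_aeval.mp hy) h2
    exact e1.injective (hφinj h3)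
  · intro hall
    rw [algebraicIndependent_iff_injective_aeval]
    intro p q hpq
    obtain ⟨p', rfl⟩ := hφsurj p
    obtain ⟨q', rfl⟩ := hφsurj q
    obtain ⟨p'', rfl⟩ := e1.surjective p'
    obtain ⟨q'', rfl⟩ := e1.surjective q'
    rw [hfun, hfun] at hpq
    rw [(algebraicIndependent_iff_injective_aeval.mp hall).eq_iff] at hpq
    rw [hpq]

end Concat


section Exchange

open Polynomial

variable {k F : Type*} [Field k] [Field F] [Algebra k F]

/-- The exchange property: if `x` is transcendental over `k` but algebraic over `k(c)`,
then `c` is algebraic over `k(x)`. -/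
theorem myExchange {c x : F} (ht : Transcendental k x)
    (ha : IsAlgebraic ↥(IntermediateField.adjoin k {c}) x) :
    IsAlgebraic ↥(IntermediateField.adjoin k {x}) c := by
  classical
  by_cases hc : IsAlgebraic k c
  · exact IsAlgebraic.tower_top _ hc
  obtain ⟨P, hP0, hPx⟩ := ha
  have key : ∀ i : ℕ, ∃ rs : Polynomial k × Polynomial k,
      (Polynomial.aeval c) rs.2 ≠ 0 ∧
        ((P.coeff i : F) * (Polynomial.aeval c) rs.2 = (Polynomial.aeval c) rs.1) := by
    intro i
    have hm : (P.coeff i : F) ∈ IntermediateField.adjoin k {c} := (P.coeff i).2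
    rw [IntermediateField.mem_adjoin_simple_iff] at hm
    obtain ⟨r, s, hrs⟩ := hm
    by_cases hs : (Polynomial.aeval c) s = 0
    · exact ⟨(0, 1), by simp, by simp [hrs, hs]⟩
    · exact ⟨(r, s), hs, by rw [hrs, div_mul_cancel₀ _ hs]⟩
  choose rs hs2 hs4 using key
  set deg := P.natDegree with hdeg
  set Sden : F := ∏ i ∈ Finset.range (deg + 1), (Polynomial.aeval c) (rs i).2 with hSden
  have hSdne : Sden ≠ 0 := Finset.prod_ne_zero_iff.2 (fun i _ => hs2 i)
  set Rp : ℕ → Polynomial k :=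
    fun i => (rs i).1 * ∏ j ∈ (Finset.range (deg + 1)).erase i, (rs j).2 with hRp
  have hRpev : ∀ i ∈ Finset.range (deg + 1),
      (Polynomial.aeval c) (Rp i) = (P.coeff i : F) * Sden := by
    intro i hi
    rw [hRp]
    simp only [map_mul, map_prod]
    rw [hSden, ← Finset.mul_prod_erase _ _ hi, ← mul_assoc, hs4 i, mul_comm ((aeval c) (rs i).1)]
  -- main relation
  have hrel : ∑ i ∈ Finset.range (deg + 1), (Polynomial.aeval c) (Rp i) * x ^ i = 0 := by
    have hPexp : (Polynomial.aeval x) P =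
        ∑ i ∈ Finset.range (deg + 1), (P.coeff i : F) * x ^ i := by
      rw [Polynomial.aeval_eq_sum_range]
      exact Finset.sum_congr rfl (fun i _ => by rw [Algebra.smul_def]; rfl)
    have : ∑ i ∈ Finset.range (deg + 1), (Polynomial.aeval c) (Rp i) * x ^ i
        = (∑ i ∈ Finset.range (deg + 1), (P.coeff i : F) * x ^ i) * Sden := by
      rw [Finset.sum_mul]
      exact Finset.sum_congr rfl (fun i hi => by rw [hRpev i hi]; ring)
    rw [this, ← hPexp, hPx, zero_mul]
  set J := (Finset.range (deg + 1)).sup (fun i => (Rp i).natDegree) with hJ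
  set T : ℕ → Polynomial k :=
    fun j => ∑ i ∈ Finset.range (deg + 1), Polynomial.C ((Rp i).coeff j) * Polynomial.X ^ i
    with hT
  have hTev : ∀ j, (Polynomial.aeval x) (T j)
      = ∑ i ∈ Finset.range (deg + 1), algebraMap k F ((Rp i).coeff j) * x ^ i := by
    intro j
    rw [hT]
    simp only [map_sum, map_mul, map_pow, Polynomial.aeval_C, Polynomial.aeval_X]
  have hswap : ∑ j ∈ Finset.range (J + 1), (Polynomial.aeval x) (T j) * c ^ j = 0 := by
    have h1 : ∀ i ∈ Finset.range (deg + 1), (Polynomial.aeval c) (Rp i)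
        = ∑ j ∈ Finset.range (J + 1), algebraMap k F ((Rp i).coeff j) * c ^ j := by
      intro i hi
      rw [Polynomial.aeval_eq_sum_range'
        (Nat.lt_succ_of_le (Finset.le_sup (f := fun i => (Rp i).natDegree) hi))]
      exact Finset.sum_congr rfl (fun j _ => by rw [Algebra.smul_def])
    calc ∑ j ∈ Finset.range (J + 1), (Polynomial.aeval x) (T j) * c ^ j
        = ∑ j ∈ Finset.range (J + 1), ∑ i ∈ Finset.range (deg + 1),
            (algebraMap k F ((Rp i).coeff j) * c ^ j) * x ^ i := by
          refine Finset.sum_congr rfl (fun j _ => ?_)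
          rw [hTev, Finset.sum_mul]
          exact Finset.sum_congr rfl (fun i _ => by ring)
      _ = ∑ i ∈ Finset.range (deg + 1), (∑ j ∈ Finset.range (J + 1),
            algebraMap k F ((Rp i).coeff j) * c ^ j) * x ^ i := by
          rw [Finset.sum_comm]
          exact Finset.sum_congr rfl (fun i _ => by rw [Finset.sum_mul])
      _ = ∑ i ∈ Finset.range (deg + 1), (Polynomial.aeval c) (Rp i) * x ^ i := by
          exact Finset.sum_congr rfl (fun i hi => by rw [h1 i hi])
      _ = 0 := hrel
  -- nonvanishing
  have hcoeffdeg : (P.coeff deg : F) ≠ 0 := by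
    intro h
    exact Polynomial.leadingCoeff_ne_zero.2 hP0 (ZeroMemClass.coe_eq_zero.mp h)
  have hideg : deg ∈ Finset.range (deg + 1) := Finset.self_mem_range_succ deg
  have hRpne : (Polynomial.aeval c) (Rp deg) ≠ 0 := by
    rw [hRpev deg hideg]
    exact mul_ne_zero hcoeffdeg hSdne
  have hRpne' : Rp deg ≠ 0 := fun h => hRpne (by rw [h, map_zero])
  set j₀ := (Rp deg).natDegree with hj₀
  have hcoefne : (Rp deg).coeff j₀ ≠ 0 := Polynomial.leadingCoeff_ne_zero.2 hRpne'
  have hj₀J : j₀ ∈ Finset.range (J + 1) := by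
    rw [hj₀, hJ]
    exact Finset.mem_range.2
      (Nat.lt_succ_of_le (Finset.le_sup (f := fun i => (Rp i).natDegree) hideg))
  have hTne : T j₀ ≠ 0 := by
    intro h
    have : (T j₀).coeff deg = (Rp deg).coeff j₀ := by
      rw [hT]
      rw [Polynomial.finset_sum_coeff]
      rw [Finset.sum_eq_single deg]
      · rw [Polynomial.coeff_C_mul, Polynomial.coeff_X_pow, if_pos rfl, mul_one]
      · intro b _ hb
        rw [Polynomial.coeff_C_mul, Polynomial.coeff_X_pow, if_neg (fun h => hb h.symm), mul_zero]
      · intro h'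
        exact absurd hideg h'
    rw [h, Polynomial.coeff_zero] at this
    exact hcoefne this.symm
  have hTxne : (Polynomial.aeval x) (T j₀) ≠ 0 := by
    intro h
    exact ht ⟨T j₀, hTne, h⟩
  -- the witness polynomial over k(x)
  have hmemT : ∀ j, (Polynomial.aeval x) (T j) ∈ IntermediateField.adjoin k {x} := by
    intro j
    apply IntermediateField.algebra_adjoin_le_adjoin
    rw [Algebra.adjoin_singleton_eq_range_aeval]
    exact ⟨T j, rfl⟩
  set Q : Polynomial ↥(IntermediateField.adjoin k {x}) :=
    ∑ j ∈ Finset.range (J + 1),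
      Polynomial.C (⟨_, hmemT j⟩ : ↥(IntermediateField.adjoin k {x})) * Polynomial.X ^ j
    with hQ
  have hQcoeff : Q.coeff j₀ = ⟨_, hmemT j₀⟩ := by
    rw [hQ, Polynomial.finset_sum_coeff]
    rw [Finset.sum_eq_single j₀]
    · rw [Polynomial.coeff_C_mul, Polynomial.coeff_X_pow, if_pos rfl, mul_one]
    · intro b _ hb
      rw [Polynomial.coeff_C_mul, Polynomial.coeff_X_pow, if_neg (fun h => hb h.symm), mul_zero]
    · intro h'
      exact absurd hj₀J h'
  have hQ0 : Q ≠ 0 := by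
    intro h
    rw [h, Polynomial.coeff_zero] at hQcoeff
    exact hTxne (by simpa [Subtype.ext_iff] using hQcoeff.symm)
  have hQc : (Polynomial.aeval c) Q = 0 := by
    rw [hQ, map_sum]
    have : ∀ j ∈ Finset.range (J + 1),
        (Polynomial.aeval c) (Polynomial.C (⟨_, hmemT j⟩ :
          ↥(IntermediateField.adjoin k {x})) * Polynomial.X ^ j)
        = (Polynomial.aeval x) (T j) * c ^ j := by
      intro j _
      rw [map_mul, map_pow, Polynomial.aeval_C, Polynomial.aeval_X]
      rfl
    rw [Finset.sum_congr rfl this, hswap]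
  exact ⟨Q, hQ0, hQc⟩

end Exchange


section Bridge

variable {F : Type*} [Field F]

/-- Inclusion ring hom between subring-like objects of `F`. -/
def myInc {S₁ S₂ : Type*} [SetLike S₁ F] [SubringClass S₁ F] [SetLike S₂ F] [SubringClass S₂ F]
    (A : S₁) (B : S₂) (h : (A : Set F) ⊆ (B : Set F)) : ↥A →+* ↥B where
  toFun a := ⟨a.1, h a.2⟩
  map_one' := rfl
  map_mul' _ _ := rfl
  map_zero' := rfl
  map_add' _ _ := rfl

variable {k₁ k₂ : Type*} [Field k₁] [Field k₂] [Algebra k₁ F] [Algebra k₂ F]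

theorem myAlg.le {A : IntermediateField k₁ F} {B : IntermediateField k₂ F}
    (h : (A : Set F) ⊆ (B : Set F)) {x : F} (ha : IsAlgebraic ↥A x) : IsAlgebraic ↥B x :=
  myAlg.up (F := F) (myInc A B h) (fun _ => rfl) ha Subtype.val_injective

theorem myTrans.le {A : IntermediateField k₁ F} {B : IntermediateField k₂ F}
    (h : (A : Set F) ⊆ (B : Set F)) {x : F} (ht : Transcendental ↥B x) : Transcendental ↥A x :=
  myTrans.down (F := F) (myInc A B h) (fun _ => rfl) ht Subtype.val_injective

theorem myAI.le {A : IntermediateField k₁ F} {B : IntermediateField k₂ F}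
    (h : (A : Set F) ⊆ (B : Set F)) {ι : Type*} {v : ι → F}
    (hv : AlgebraicIndependent ↥B v) : AlgebraicIndependent ↥A v :=
  myAI.down (F := F) (myInc A B h) (fun _ => rfl) Subtype.val_injective hv

/-- Tower-bot : if `M/k` is algebraic and `x` is algebraic over `M` then `x` is algebraic
over `k`. -/
theorem myTB {k : Type*} [Field k] [Algebra k F] (M : IntermediateField k F)
    [Algebra.IsAlgebraic k ↥M] {x : F} (hx : IsAlgebraic ↥M x) : IsAlgebraic k x :=
  (isIntegral_trans (A := ↥M) x hx.isIntegral).isAlgebraic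

theorem myAdjAdj {k : Type*} [Field k] [Algebra k F] (S T : Set F) :
    IntermediateField.adjoin k (↑(IntermediateField.adjoin k S) ∪ T)
      = IntermediateField.adjoin k (S ∪ T) := by
  apply le_antisymm
  · rw [IntermediateField.adjoin_le_iff]
    apply Set.union_subset
    · exact (IntermediateField.adjoin.mono k S _ Set.subset_union_left :
        IntermediateField.adjoin k S ≤ IntermediateField.adjoin k (S ∪ T))
    · exact Set.Subset.trans Set.subset_union_right (IntermediateField.subset_adjoin k (S ∪ T))
  · exact IntermediateField.adjoin.mono k _ _
      (Set.union_subset_union_left T (IntermediateField.subset_adjoin k S))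
end Bridge

section Core

variable {F : Type u} [Field F]

/-- Core counting principle: an algebraically independent family, each of whose members is
algebraic over the field generated by `p` elements, has at most `p` members. -/
theorem myCore : ∀ (p : ℕ) {k : Type u} [Field k] [Algebra k F]
    (b : Fin p → F) {m : ℕ} (v : Fin m → F),
    AlgebraicIndependent k v →
    (∀ i, IsAlgebraic ↥(IntermediateField.adjoin k (Set.range b)) (v i)) → m ≤ p := by
  intro p
  induction p with
  | zero =>
    intro k _ _ b m v hv halg
    match m, v, hv, halg with
    | 0, v, hv, halg => exact le_refl 0
    | (m' + 1), v, hv, halg =>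
      exfalso
      have hrb : Set.range b = (∅ : Set F) := Set.range_eq_empty b
      haveI : Algebra.IsAlgebraic k ↥(IntermediateField.adjoin k (Set.range b)) := by
        rw [hrb]
        exact IntermediateField.isAlgebraic_adjoin (by simp)
      exact hv.transcendental 0 (myTB _ (halg 0))
  | succ p IH =>
    intro k _ _ b m v hv halg
    classical
    by_cases hall : ∀ i, IsAlgebraic ↥(IntermediateField.adjoin k (Set.range (b ∘ Fin.succ))) (v i)
    · exact le_trans (IH (b ∘ Fin.succ) v hv hall) (Nat.le_succ p)
    push_neg at hall
    obtain ⟨k₀, hk₀⟩ := hall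
    match m, v, hv, halg, k₀, hk₀ with
    | (m' + 1), v, hv, halg, k₀, hk₀ =>
      set σ : Equiv.Perm (Fin (m' + 1)) := Equiv.swap k₀ (Fin.last m') with hσ
      set v' : Fin (m' + 1) → F := v ∘ σ with hv'def
      have hv'ai : AlgebraicIndependent k v' := hv.comp σ σ.injective
      have halg' : ∀ i, IsAlgebraic ↥(IntermediateField.adjoin k (Set.range b)) (v' i) :=
        fun i => halg _
      set x₀ := v' (Fin.last m') with hx₀
      set M := IntermediateField.adjoin k (Set.range (b ∘ Fin.succ)) with hM
      have htrans : Transcendental ↥M x₀ := by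
        rw [hx₀, hv'def]
        simpa [hσ, Equiv.swap_apply_right, Transcendental] using hk₀
      have hrange : Set.range b = Set.range (b ∘ Fin.succ) ∪ {b 0} := by
        ext y
        constructor
        · rintro ⟨i, rfl⟩
          rcases Fin.eq_zero_or_eq_succ i with h0 | ⟨j, rfl⟩
          · exact Or.inr (by rw [h0]; rfl)
          · exact Or.inl ⟨j, rfl⟩
        · rintro (⟨j, rfl⟩ | hy)
          · exact ⟨j.succ, rfl⟩
          · exact ⟨0, by rw [Set.mem_singleton_iff] at hy; rw [hy]⟩
      -- the set of the adjoined field, rewritten via M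
      have hcar1 : (↑(IntermediateField.adjoin ↥M {b 0} : IntermediateField ↥M F) : Set F)
          = ↑(IntermediateField.adjoin k (Set.range b)) := by
        have h1 := IntermediateField.restrictScalars_adjoin k M {b 0}
        have h2 : (↑(IntermediateField.adjoin ↥M {b 0} : IntermediateField ↥M F) : Set F)
            = ↑(IntermediateField.restrictScalars k (IntermediateField.adjoin ↥M {b 0})) := rfl
        rw [h2, h1, hM, myAdjAdj, ← hrange]
      -- exchange
      have htr2 : IsAlgebraic ↥(IntermediateField.adjoin ↥M {b 0}) x₀ :=
        myAlg.le (le_of_eq hcar1.symm) (halg' (Fin.last m'))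
      have hexch : IsAlgebraic ↥(IntermediateField.adjoin ↥M {x₀}) (b 0) := myExchange htrans htr2
      -- new base field
      set L₁ := IntermediateField.adjoin k {x₀} with hL₁
      set N := IntermediateField.adjoin k ({x₀} ∪ Set.range (b ∘ Fin.succ)) with hN
      have hcarN : (↑(IntermediateField.adjoin ↥M {x₀} : IntermediateField ↥M F) : Set F)
          = ↑N := by
        have h1 := IntermediateField.restrictScalars_adjoin k M {x₀}
        have h2 : (↑(IntermediateField.adjoin ↥M {x₀} : IntermediateField ↥M F) : Set F)
            = ↑(IntermediateField.restrictScalars k (IntermediateField.adjoin ↥M {x₀})) := rfl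
        rw [h2, h1, hM, myAdjAdj, hN, Set.union_comm]
      have hb0N : IsAlgebraic ↥N (b 0) := myAlg.le (le_of_eq hcarN) hexch
      -- every v' i is algebraic over N
      have halgN : ∀ i, IsAlgebraic ↥N (v' i) := by
        intro i
        have hcar2 : (↑(IntermediateField.adjoin ↥N {b 0} : IntermediateField ↥N F) : Set F)
            = ↑(IntermediateField.adjoin k (({x₀} ∪ Set.range (b ∘ Fin.succ)) ∪ {b 0})) := by
          have h1 := IntermediateField.restrictScalars_adjoin k N {b 0}
          have h2 : (↑(IntermediateField.adjoin ↥N {b 0} : IntermediateField ↥N F) : Set F)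
              = ↑(IntermediateField.restrictScalars k (IntermediateField.adjoin ↥N {b 0})) := rfl
          rw [h2, h1, hN, myAdjAdj]
        have hsub : (↑(IntermediateField.adjoin k (Set.range b)) : Set F)
            ⊆ ↑(IntermediateField.adjoin ↥N {b 0} : IntermediateField ↥N F) := by
          rw [hcar2]
          apply SetLike.coe_subset_coe.2
          apply IntermediateField.adjoin.mono
          rw [hrange]
          intro y hy
          rcases hy with hy | hy
          · exact Or.inl (Or.inr hy)
          · exact Or.inr hy
        have h5 := myAlg.le hsub (halg' i)
        haveI : Algebra.IsAlgebraic ↥N ↥(IntermediateField.adjoin ↥N {b 0}) :=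
          IntermediateField.isAlgebraic_adjoin_simple hb0N.isIntegral
        exact myTB _ h5
      -- tail family is algebraically independent over L₁
      have htail : AlgebraicIndependent ↥L₁ (v' ∘ Fin.castSucc) := by
        set e : Fin m' ⊕ Fin 1 ≃ Fin (m' + 1) := finSumFinEquiv with he
        have hcomp : v' ∘ e = Sum.elim (v' ∘ Fin.castSucc) (fun _ : Fin 1 => x₀) := by
          funext j
          rcases j with j | j
          · show v' (e (Sum.inl j)) = v' (Fin.castSucc j)
            rw [he, finSumFinEquiv_apply_left]
            rfl
          · have : e (Sum.inr j) = Fin.last m' := by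
              have hj : j = 0 := Subsingleton.elim j 0
              rw [he, hj, finSumFinEquiv_apply_right]
              ext
              simp [Fin.natAdd, Fin.last]
            show v' (e (Sum.inr j)) = x₀
            rw [this, hx₀]
        have hsum : AlgebraicIndependent k (Sum.elim (v' ∘ Fin.castSucc) (fun _ : Fin 1 => x₀)) := by
          rw [← hcomp]
          exact (algebraicIndependent_equiv e).2 hv'ai
        have hhead : AlgebraicIndependent k (fun _ : Fin 1 => x₀) := by
          rw [algebraicIndependent_unique_type_iff]
          exact hv'ai.transcendental (Fin.last m')
        have hring := (myAI.sum_iff hhead (v' ∘ Fin.castSucc)).2 hsum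
        have hrr : Set.range (fun _ : Fin 1 => x₀) = {x₀} := Set.range_const
        rw [hrr] at hring
        exact myAI.toField _ hring
      -- algebraicity of the tail over adjoin L₁ (range (b∘succ))
      have halgtail : ∀ j : Fin m',
          IsAlgebraic ↥(IntermediateField.adjoin ↥L₁ (Set.range (b ∘ Fin.succ)))
            ((v' ∘ Fin.castSucc) j) := by
        intro j
        have hcar3 : (↑(IntermediateField.adjoin ↥L₁ (Set.range (b ∘ Fin.succ)) :
            IntermediateField ↥L₁ F) : Set F) = ↑N := by
          have h1 := IntermediateField.restrictScalars_adjoin k L₁ (Set.range (b ∘ Fin.succ))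
          have h2 : (↑(IntermediateField.adjoin ↥L₁ (Set.range (b ∘ Fin.succ)) :
              IntermediateField ↥L₁ F) : Set F)
              = ↑(IntermediateField.restrictScalars k
                  (IntermediateField.adjoin ↥L₁ (Set.range (b ∘ Fin.succ)))) := rfl
          rw [h2, h1, hL₁, myAdjAdj, hN]
        exact myAlg.le (le_of_eq hcar3.symm) (halgN (Fin.castSucc j))
      have := IH (k := ↥L₁) (b ∘ Fin.succ) (v' ∘ Fin.castSucc) htail halgtail
      omega

end Core

section TD

variable {F : Type u} [Field F] [CharZero F]

theorem myNontrivAdj (B : Set F) : Nontrivial ↥(Algebra.adjoin ℚ B) :=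
  ⟨⟨0, zero_mem _⟩, ⟨1, one_mem _⟩, by
    intro h
    simpa [Subtype.ext_iff] using h⟩

theorem myTd.bdd {A B : Set F} (hA : A.Finite) :
    BddAbove {n : ℕ | ∃ s : Fin n → F, (∀ i, s i ∈ A) ∧
      AlgebraicIndependent (Algebra.adjoin ℚ B) s} := by
  classical
  haveI := hA.fintype
  haveI := myNontrivAdj B
  refine ⟨Fintype.card ↥A, fun n hn => ?_⟩
  obtain ⟨s, hmem, hind⟩ := hn
  have hinj : Function.Injective (fun i : Fin n => (⟨s i, hmem i⟩ : ↥A)) := by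
    intro a b hab
    exact hind.injective (by simpa [Subtype.ext_iff] using hab)
  simpa using Fintype.card_le_of_injective _ hinj

theorem myTd.le {A B : Set F} (hA : A.Finite) {n : ℕ} {s : Fin n → F}
    (hmem : ∀ i, s i ∈ A) (hind : AlgebraicIndependent (Algebra.adjoin ℚ B) s) :
    n ≤ td A B :=
  le_csSup (myTd.bdd hA) ⟨s, hmem, hind⟩

theorem myTd.attained (A B : Set F) (hA : A.Finite) :
    ∃ s : Fin (td A B) → F, (∀ i, s i ∈ A) ∧
      AlgebraicIndependent (Algebra.adjoin ℚ B) s := by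
  have h0 : 0 ∈ {n : ℕ | ∃ s : Fin n → F, (∀ i, s i ∈ A) ∧
      AlgebraicIndependent (Algebra.adjoin ℚ B) s} := by
    refine ⟨fun i => i.elim0, fun i => i.elim0, ?_⟩
    rw [algebraicIndependent_empty_type_iff]
    exact Subtype.val_injective
  exact Nat.sSup_mem ⟨0, h0⟩ (myTd.bdd hA)

/-- The key tower inequality for `td`. -/
theorem myTd.tower {Az Aw E₀ E₁ : Set F} (hAz : Az.Finite) (hAw : Aw.Finite)
    (hE : E₀ ⊆ E₁) (hAwE : Aw ⊆ E₁)
    (hAwmem : ∀ y ∈ Aw, y ∈ Subfield.closure (E₀ ∪ Az)) :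
    td Aw E₀ + td Az E₁ ≤ td Az E₀ := by
  classical
  set K₀ := IntermediateField.adjoin ℚ E₀ with hK₀
  set K₁ := IntermediateField.adjoin ℚ E₁ with hK₁
  obtain ⟨s, hsmem, hsind⟩ := myTd.attained Aw E₀ hAw
  obtain ⟨u, humem, huind⟩ := myTd.attained Az E₁ hAz
  have hsK : AlgebraicIndependent ↥K₀ s := myAI.toField E₀ hsind
  have huK : AlgebraicIndependent ↥K₁ u := myAI.toField E₁ huind
  -- u is independent over the ring generated by K₀ and s
  have hsub1 : ((Algebra.adjoin ↥K₀ (Set.range s) : Subalgebra ↥K₀ F) : Set F) ⊆ (K₁ : Set F) := by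
    intro z hz
    induction hz using Algebra.adjoin_induction with
    | mem y hy =>
      obtain ⟨i, rfl⟩ := hy
      exact IntermediateField.subset_adjoin ℚ E₁ (hAwE (hsmem i))
    | algebraMap a =>
      exact IntermediateField.adjoin.mono ℚ E₀ E₁ hE a.2
    | add _ _ _ _ h1 h2 => exact add_mem h1 h2
    | mul _ _ _ _ h1 h2 => exact mul_mem h1 h2
  have hu' : AlgebraicIndependent ↥(Algebra.adjoin ↥K₀ (Set.range s)) u :=
    myAI.down (F := F) (myInc _ _ hsub1) (fun _ => rfl) Subtype.val_injective huK
  have hconcat : AlgebraicIndependent ↥K₀ (Sum.elim u s) := (myAI.sum_iff hsK u).1 hu'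
  -- a maximal independent subset of Az
  have hemp : AlgebraicIndependent ↥K₀ (Subtype.val : (∅ : Set F) → F) := by
    rw [algebraicIndependent_empty_iff]
    exact Subtype.val_injective
  obtain ⟨Tm, -, hTmax⟩ := exists_maximal_algebraicIndependent (∅ : Set F) Az
    (Set.empty_subset Az) hemp
  obtain ⟨⟨hTm_ai, hTmAz⟩, hTmaxmax⟩ := hTmax
  have hTm_fin : Tm.Finite := hAz.subset hTmAz
  haveI := hTm_fin.fintype
  set τ := Fintype.card ↥Tm with hτ
  set eT : Fin τ ≃ ↥Tm := (Fintype.equivFin ↥Tm).symm with heT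
  set b : Fin τ → F := fun i => ↑(eT i) with hb
  have hb_ai : AlgebraicIndependent ↥K₀ b := hTm_ai.comp eT eT.injective
  have hrangeb : Set.range b = Tm := by
    ext y
    constructor
    · rintro ⟨i, rfl⟩
      exact (eT i).2
    · intro hy
      exact ⟨eT.symm ⟨y, hy⟩, by simp [hb]⟩
  -- τ ≤ td Az E₀
  have hτle : τ ≤ td Az E₀ := by
    have hdown : AlgebraicIndependent ↥(Algebra.adjoin ℚ E₀) b :=
      myAI.down (F := F) (myInc _ _ (IntermediateField.algebra_adjoin_le_adjoin ℚ E₀))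
        (fun _ => rfl) Subtype.val_injective hb_ai
    exact myTd.le hAz (fun i => hTmAz (eT i).2) hdown
  -- every element of Az is algebraic over K₀T := adjoin K₀ Tm
  set K₀T := IntermediateField.adjoin ↥K₀ Tm with hK₀T
  have halgAz : ∀ a ∈ Az, IsAlgebraic ↥K₀T a := by
    intro a ha
    by_cases haT : a ∈ Tm
    · have : IsAlgebraic ↥K₀T (algebraMap ↥K₀T F ⟨a, IntermediateField.subset_adjoin _ _ haT⟩) :=
        isAlgebraic_algebraMap _
      exact this
    · have hra : IsAlgebraic ↥(Algebra.adjoin ↥K₀ Tm) a := by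
        by_contra hta
        have htr : Transcendental ↥(Algebra.adjoin ↥K₀ (Set.range (Subtype.val : Tm → F)))
            a := by
          rw [Subtype.range_coe]
          exact hta
        have hopt := (hTm_ai.option_iff_transcendental a).2 htr
        have hins : AlgebraicIndependent ↥K₀ (Subtype.val : ↥(insert a Tm) → F) := by
          have hcomp := hopt.comp _ (Set.subtypeInsertEquivOption haT).injective
          convert hcomp using 1
          ext x
          by_cases hx : ↑x = a <;> simp [hx, Set.subtypeInsertEquivOption]
        have hle : insert a Tm ⊆ Tm :=
          hTmaxmax ⟨hins, Set.insert_subset ha hTmAz⟩ (Set.subset_insert a Tm)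
        exact haT (hle (Set.mem_insert a Tm))
      exact myAlg.up (F := F)
        (myInc _ _ (IntermediateField.algebra_adjoin_le_adjoin ↥K₀ Tm))
        (fun _ => rfl) hra Subtype.val_injective
  -- the field W = K₀T(Az) is algebraic over K₀T and contains all relevant elements
  set W := IntermediateField.adjoin ↥K₀T Az with hW
  haveI hWalg : Algebra.IsAlgebraic ↥K₀T ↥W :=
    IntermediateField.isAlgebraic_adjoin (fun x hx => (halgAz x hx).isIntegral)
  have hmemW : ∀ y : F, y ∈ Subfield.closure (E₀ ∪ Az) → y ∈ W := by
    intro y hy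
    apply Subfield.closure_le.2 _ hy
    intro z hz
    rcases hz with hz | hz
    · -- z ∈ E₀ ⊆ K₀ ⊆ K₀T ⊆ W
      have h1 : z ∈ K₀ := IntermediateField.subset_adjoin ℚ E₀ hz
      have h2 : z ∈ K₀T := IntermediateField.subset_adjoin ↥K₀ Tm
        |> fun _ => (by
          exact (IntermediateField.algebraMap_mem K₀T ⟨z, h1⟩ : (algebraMap ↥K₀ F ⟨z, h1⟩) ∈ K₀T))
      exact (IntermediateField.algebraMap_mem W ⟨z, h2⟩ : (algebraMap ↥K₀T F ⟨z, h2⟩) ∈ W)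
    · exact IntermediateField.subset_adjoin _ _ hz
  have halgW : ∀ y : F, y ∈ W → IsAlgebraic ↥K₀T y := by
    intro y hy
    have := Algebra.IsAlgebraic.isAlgebraic (R := ↥K₀T) (⟨y, hy⟩ : ↥W)
    exact (IntermediateField.isAlgebraic_iff).1 this
  -- apply the core counting theorem
  set v : Fin (td Az E₁ + td Aw E₀) → F :=
    (Sum.elim u s) ∘ (finSumFinEquiv (m := td Az E₁) (n := td Aw E₀)).symm with hv
  have hvai : AlgebraicIndependent ↥K₀ v := by
    have : v ∘ (finSumFinEquiv (m := td Az E₁) (n := td Aw E₀)) = Sum.elim u s := by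
      funext x
      simp [hv]
    exact (algebraicIndependent_equiv _).1 (by rw [this]; exact hconcat)
  have hvalg : ∀ i, IsAlgebraic ↥(IntermediateField.adjoin ↥K₀ (Set.range b)) (v i) := by
    intro i
    rw [hrangeb]
    have hve : v i = Sum.elim u s (finSumFinEquiv.symm i) := rfl
    rw [hve]
    rcases finSumFinEquiv.symm i with j | j
    · exact halgW _ (hmemW _ (Subfield.subset_closure (Or.inr (humem j))))
    · exact halgW _ (hmemW _ (hAwmem _ (hsmem j)))
  have := myCore τ b v hvai hvalg
  omega

end TD

section LDim

open Submodule

variable {R : Type*} [DivisionRing R] {V : Type*} [AddCommGroup V] [Module R V]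

/-- Normal form : ldim is the rank of the span of the image of `A` in `V ⧸ span R B`. -/
theorem myLdim.eq (A B : Set V) :
    ldim R A B = Module.finrank R ↥(span R ((span R B).mkQ '' A)) := by
  classical
  set P := span R (A ∪ B) with hP
  set Q := span R B with hQ
  set f : ↥P →ₗ[R] V ⧸ Q := Q.mkQ ∘ₗ P.subtype with hf
  have hker : LinearMap.ker f = Q.comap P.subtype := by
    rw [hf, LinearMap.ker_comp, Submodule.ker_mkQ]
  have e1 : (↥P ⧸ Q.comap P.subtype) ≃ₗ[R] ↥(LinearMap.range f) := by
    rw [← hker]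
    exact f.quotKerEquivRange
  have hrange : LinearMap.range f = span R (Q.mkQ '' A) := by
    rw [hf, LinearMap.range_comp, Submodule.range_subtype]
    show Submodule.map Q.mkQ P = _
    rw [hP, Submodule.map_span, Set.image_union, Submodule.span_union]
    have hB : span R (Q.mkQ '' B) = ⊥ := by
      rw [Submodule.span_eq_bot]
      rintro y ⟨b, hb, rfl⟩
      rw [Submodule.mkQ_apply, Submodule.Quotient.mk_eq_zero]
      exact subset_span hb
    rw [hB, sup_bot_eq]
  unfold ldim
  rw [LinearEquiv.finrank_eq e1, LinearEquiv.finrank_eq (LinearEquiv.ofEq _ _ hrange)]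

theorem myGen.ge {W₀ W₁ : Type*} [AddCommGroup W₀] [Module R W₀] [AddCommGroup W₁]
    [Module R W₁] (h : W₀ →ₗ[R] W₁) {n d : ℕ} (zz : Fin n → W₀) (ww : Fin d → W₀)
    (hw1 : ∀ j, ww j ∈ span R (Set.range zz)) (hw2 : ∀ j, h (ww j) = 0) :
    Module.finrank R ↥(span R (Set.range ww))
      + Module.finrank R ↥(span R (Set.range (h ∘ zz)))
      ≤ Module.finrank R ↥(span R (Set.range zz)) := by
  classical
  set Sz := span R (Set.range zz) with hSz
  set Sw := span R (Set.range ww) with hSw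
  have hle : Sw ≤ Sz := span_le.2 (Set.range_subset_iff.2 hw1)
  haveI : FiniteDimensional R ↥Sz := FiniteDimensional.span_of_finite R (Set.finite_range zz)
  set N := Sw.comap Sz.subtype with hN
  have htower : Module.finrank R (↥Sz ⧸ N) + Module.finrank R ↥N = Module.finrank R ↥Sz :=
    Submodule.finrank_quotient_add_finrank N
  have hNW : Module.finrank R ↥N = Module.finrank R ↥Sw :=
    LinearEquiv.finrank_eq (Submodule.comapSubtypeEquivOfLe hle)
  have hswker : Sw ≤ LinearMap.ker h := by
    rw [hSw, span_le]
    rintro y ⟨j, rfl⟩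
    simpa [LinearMap.mem_ker] using hw2 j
  have hker : N ≤ LinearMap.ker (h ∘ₗ Sz.subtype) := by
    intro x hx
    have : (x : W₀) ∈ Sw := hx
    simpa [LinearMap.mem_ker] using hswker this
  set g := Submodule.liftQ N (h ∘ₗ Sz.subtype) hker with hg
  have hrange : LinearMap.range g = span R (Set.range (h ∘ zz)) := by
    rw [hg, Submodule.range_liftQ, LinearMap.range_comp, Submodule.range_subtype]
    show Submodule.map h Sz = _
    rw [hSz, Submodule.map_span, ← Set.range_comp]
  have hfr : Module.finrank R ↥(span R (Set.range (h ∘ zz))) ≤ Module.finrank R (↥Sz ⧸ N) := by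
    rw [← hrange]
    exact LinearMap.finrank_range_le g
  omega

theorem myGen.le {W₀ W₁ : Type*} [AddCommGroup W₀] [Module R W₀] [AddCommGroup W₁]
    [Module R W₁] (h : W₀ →ₗ[R] W₁) {n d : ℕ} (zz : Fin n → W₀) (ww : Fin d → W₀)
    (hw1 : ∀ j, ww j ∈ span R (Set.range zz)) (hw2 : ∀ j, h (ww j) = 0)
    (hw3 : ∀ x ∈ span R (Set.range zz), h x = 0 → x ∈ span R (Set.range ww)) :
    Module.finrank R ↥(span R (Set.range zz))
      ≤ Module.finrank R ↥(span R (Set.range ww))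
        + Module.finrank R ↥(span R (Set.range (h ∘ zz))) := by
  classical
  set Sz := span R (Set.range zz) with hSz
  set Sw := span R (Set.range ww) with hSw
  have hle : Sw ≤ Sz := span_le.2 (Set.range_subset_iff.2 hw1)
  haveI : FiniteDimensional R ↥Sz := FiniteDimensional.span_of_finite R (Set.finite_range zz)
  set N := Sw.comap Sz.subtype with hN
  have htower : Module.finrank R (↥Sz ⧸ N) + Module.finrank R ↥N = Module.finrank R ↥Sz :=
    Submodule.finrank_quotient_add_finrank N
  have hNW : Module.finrank R ↥N = Module.finrank R ↥Sw :=
    LinearEquiv.finrank_eq (Submodule.comapSubtypeEquivOfLe hle)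
  have hker : N ≤ LinearMap.ker (h ∘ₗ Sz.subtype) := by
    intro x hx
    have hxw : (x : W₀) ∈ Sw := hx
    have hswker : Sw ≤ LinearMap.ker h := by
      rw [hSw, span_le]
      rintro y ⟨j, rfl⟩
      simpa [LinearMap.mem_ker] using hw2 j
    simpa [LinearMap.mem_ker] using hswker hxw
  set g := Submodule.liftQ N (h ∘ₗ Sz.subtype) hker with hg
  have hrange : LinearMap.range g = span R (Set.range (h ∘ zz)) := by
    rw [hg, Submodule.range_liftQ, LinearMap.range_comp, Submodule.range_subtype]
    show Submodule.map h Sz = _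
    rw [hSz, Submodule.map_span, ← Set.range_comp]
  have hginj : Function.Injective g := by
    rw [← LinearMap.ker_eq_bot, hg, Submodule.ker_liftQ_eq_bot]
    intro x hx
    have hx0 : h (x : W₀) = 0 := by simpa [LinearMap.mem_ker] using hx
    exact hw3 _ x.2 hx0
  haveI : Module.Finite R ↥(LinearMap.range g) := by
    rw [hrange]
    exact FiniteDimensional.span_of_finite R (Set.finite_range (h ∘ zz))
  have h1 : Module.finrank R (↥Sz ⧸ N) ≤ Module.finrank R ↥(LinearMap.range g) :=
    LinearMap.finrank_le_finrank_of_injective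
      (f := g.rangeRestrict) (fun a b hab => hginj (by simpa [Subtype.ext_iff] using hab))
  have h2 : Module.finrank R ↥(LinearMap.range g)
      = Module.finrank R ↥(span R (Set.range (h ∘ zz))) :=
    LinearEquiv.finrank_eq (LinearEquiv.ofEq _ _ hrange)
  omega

end LDim

section PPFGlue

open Set Submodule

variable {K : Type} [Field K] [CharZero K]

theorem myPPF.exp_zero (P : PPF K) : P.exp 0 = 1 := by
  have h := P.exp_add 0 (zero_mem P.D) 0 (zero_mem P.D)
  rw [add_zero] at h
  have hne := P.exp_ne_zero 0 (zero_mem P.D)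
  have h2 : P.exp 0 * 1 = P.exp 0 * P.exp 0 := by rw [mul_one]; exact h
  exact (mul_left_cancel₀ hne h2).symm

theorem myPPF.exp_neg (P : PPF K) {x : P.V} (hx : x ∈ P.D) : P.exp (-x) = (P.exp x)⁻¹ := by
  have h := P.exp_add x hx (-x) (neg_mem hx)
  rw [add_neg_cancel, myPPF.exp_zero] at h
  exact eq_inv_of_mul_eq_one_right h.symm

theorem myPPF.exp_nsmul (P : PPF K) {x : P.V} (hx : x ∈ P.D) (k : ℕ) :
    P.exp ((k : ℚ) • x) = P.exp x ^ k := by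
  induction k with
  | zero => simpa using myPPF.exp_zero P
  | succ k ih =>
    have hmem : (k : ℚ) • x ∈ P.D := Submodule.smul_mem _ _ hx
    have : ((k + 1 : ℕ) : ℚ) • x = (k : ℚ) • x + x := by
      push_cast
      rw [add_smul, one_smul]
    rw [this, P.exp_add _ hmem _ hx, ih, pow_succ]

theorem myPPF.exp_zsmul (P : PPF K) {x : P.V} (hx : x ∈ P.D) (c : ℤ) :
    P.exp ((c : ℚ) • x) = P.exp x ^ c := by
  cases c with
  | ofNat k =>
    have : ((Int.ofNat k : ℤ) : ℚ) = (k : ℚ) := by push_cast; rfl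
    rw [this, myPPF.exp_nsmul P hx k]
    simp
  | negSucc k =>
    have h1 : ((Int.negSucc k : ℤ) : ℚ) • x = -(((k + 1 : ℕ) : ℚ) • x) := by
      rw [← neg_smul, show ((Int.negSucc k : ℤ) : ℚ) = -(((k + 1 : ℕ) : ℚ)) by
        push_cast [Int.negSucc_eq]; ring]
    have hmem : ((k + 1 : ℕ) : ℚ) • x ∈ P.D := Submodule.smul_mem _ _ hx
    rw [h1, myPPF.exp_neg P hmem, myPPF.exp_nsmul P hx (k + 1), zpow_negSucc]

theorem myPPF.exp_sum (P : PPF K) {ι : Type*} (s : Finset ι) (f : ι → P.V)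
    (hf : ∀ i ∈ s, f i ∈ P.D) :
    P.exp (∑ i ∈ s, f i) = ∏ i ∈ s, P.exp (f i) := by
  classical
  induction s using Finset.cons_induction with
  | empty => simpa using myPPF.exp_zero P
  | cons a t ha ih =>
    rw [Finset.sum_cons, Finset.prod_cons]
    have hmem : ∑ i ∈ t, f i ∈ P.D := Submodule.sum_mem _ (fun i hi => hf i (Finset.mem_cons_of_mem hi))
    rw [P.exp_add _ (hf a (Finset.mem_cons_self a t)) _ hmem,
      ih (fun i hi => hf i (Finset.mem_cons_of_mem hi))]

theorem myPPF.qsmul (P : PPF K) (q : ℚ) (x : P.V) : q • x = (q : K) • x := by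
  have := ratCast_smul_eq (E := P.V) ℚ K q x
  simpa using this

theorem myPPF.spanQK (P : PPF K) (S : Set P.V) {x : P.V} (hx : x ∈ span ℚ S) :
    x ∈ span K S := by
  induction hx using Submodule.span_induction with
  | mem y hy => exact Submodule.subset_span hy
  | zero => exact zero_mem _
  | add _ _ _ _ h1 h2 => exact add_mem h1 h2
  | smul q y _ hy =>
    rw [myPPF.qsmul P q y]
    exact Submodule.smul_mem _ _ hy

end PPFGlue


/-- The composite of strong extensions of partial K-powered fields is strong:
if D₀ ◁ D₁ and D₁ ◁ D₂ then D₀ ◁ D₂. -/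
theorem strongExt_trans (P : PPF K) (D₀ D₁ D₂ : Submodule ℚ P.V)
    (h01 : P.StrongExt D₀ D₁) (h12 : P.StrongExt D₁ D₂) :
    P.StrongExt D₀ D₂ := by
  obtain ⟨h01le, h01D, h01ker, h01δ⟩ := h01
  obtain ⟨h12le, h12D, h12ker, h12δ⟩ := h12
  refine ⟨h01le.trans h12le, h12D, fun x hx h1 => h01ker x (h12ker x hx h1) h1, ?_⟩
  intro n z hz
  classical
  set U : Submodule ℚ P.V := span ℚ (Set.range z) with hU
  set M : Submodule ℚ P.V := U ⊓ D₁ with hM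
  haveI : FiniteDimensional ℚ ↥U := FiniteDimensional.span_of_finite ℚ (Set.finite_range z)
  haveI : FiniteDimensional ℚ ↥M := Submodule.finiteDimensional_of_le inf_le_left
  set d := Module.finrank ℚ ↥M with hd
  set bM : Module.Basis (Fin d) ℚ ↥M := Module.finBasis ℚ ↥M with hbM
  have hbU : ∀ j, (bM j : P.V) ∈ span ℚ (Set.range z) := fun j => ((bM j).2 : _ ∈ M).1
  have hbC : ∀ j, ∃ c : Fin n → ℚ, ∑ i, c i • z i = (bM j : P.V) :=
    fun j => (mem_span_range_iff_exists_fun ℚ).1 (hbU j)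
  choose c hc using hbC
  set N : Fin d → ℕ := fun j => ∏ i, (c j i).den with hN
  have hNpos : ∀ j, ((N j : ℚ)) ≠ 0 := by
    intro j
    have : 0 < N j := Finset.prod_pos (fun i _ => (c j i).den_pos)
    exact_mod_cast this.ne'
  set a : Fin d → Fin n → ℤ :=
    fun j i => (c j i).num * ∏ i' ∈ Finset.univ.erase i, ((c j i').den : ℤ) with ha
  have hNc : ∀ j i, ((a j i : ℚ)) = (N j : ℚ) * c j i := by
    intro j i
    have hden : ((c j i).den : ℚ) ≠ 0 := by exact_mod_cast (c j i).den_pos.ne'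
    have hnum : ((c j i).num : ℚ) = c j i * ((c j i).den : ℚ) := by
      exact (div_eq_iff hden).1 (Rat.num_div_den _)
    have hprod : ((N j : ℚ)) = ((c j i).den : ℚ) * ∏ i' ∈ Finset.univ.erase i, ((c j i').den : ℚ) := by
      rw [hN]
      push_cast
      rw [← Finset.mul_prod_erase _ _ (Finset.mem_univ i)]
    rw [ha]
    push_cast
    rw [hnum, hprod]
    ring
  set w : Fin d → P.V := fun j => ((N j : ℚ)) • (bM j : P.V) with hw
  have hwM : ∀ j, w j ∈ M := fun j => Submodule.smul_mem _ _ (bM j).2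
  have hwD1 : ∀ j, w j ∈ D₁ := fun j => ((hwM j) : _ ∈ U ⊓ D₁).2
  have hwU : ∀ j, w j ∈ U := fun j => ((hwM j) : _ ∈ U ⊓ D₁).1
  have hwcomb : ∀ j, w j = ∑ i, ((a j i : ℚ)) • z i := by
    intro j
    rw [hw]
    show (N j : ℚ) • (bM j : P.V) = _
    rw [← hc j, Finset.smul_sum]
    refine Finset.sum_congr rfl (fun i _ => ?_)
    rw [smul_smul, ← hNc j i]
  have hspanw : span ℚ (Set.range w) = M := by
    apply le_antisymm
    · rw [span_le]
      rintro y ⟨j, rfl⟩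
      exact hwM j
    · intro x hx
      have hbw : ∀ j, (bM j : P.V) ∈ span ℚ (Set.range w) := by
        intro j
        have h1 : (bM j : P.V) = (N j : ℚ)⁻¹ • w j := by
          rw [hw]
          show _ = (N j : ℚ)⁻¹ • ((N j : ℚ) • (bM j : P.V))
          rw [inv_smul_smul₀ (hNpos j)]
        rw [h1]
        exact Submodule.smul_mem _ _ (Submodule.subset_span ⟨j, rfl⟩)
      have key : ∀ y : ↥M, y ∈ span ℚ (Set.range ⇑bM) → ((y : P.V) ∈ span ℚ (Set.range w)) := by
        intro y hyM
        induction hyM using Submodule.span_induction with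
        | mem y' hy' =>
          obtain ⟨j, rfl⟩ := hy'
          exact hbw j
        | zero => exact zero_mem _
        | add y1 y2 _ _ hy1 hy2 => exact add_mem hy1 hy2
        | smul q y' _ hy' => exact Submodule.smul_mem _ _ hy'
      exact key ⟨x, hx⟩ (by rw [bM.span_eq]; trivial)
  have hexpw : ∀ j, P.exp (w j) = ∏ i, P.exp (z i) ^ (a j i) := by
    intro j
    rw [hwcomb j,
      myPPF.exp_sum P Finset.univ _ (fun i _ => Submodule.smul_mem _ _ (h12D (hz i)))]
    exact Finset.prod_congr rfl (fun i _ => myPPF.exp_zsmul P (h12D (hz i)) (a j i))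
  -- Inequality (I) over ℚ
  have hI : ldim ℚ (Set.range z) (D₀ : Set P.V)
      ≤ ldim ℚ (Set.range w) (D₀ : Set P.V) + ldim ℚ (Set.range z) (D₁ : Set P.V) := by
    set Q₀ : Submodule ℚ P.V := span ℚ (D₀ : Set P.V) with hQ₀'
    set Q₁ : Submodule ℚ P.V := span ℚ (D₁ : Set P.V) with hQ₁'
    have hQ₀ : Q₀ = D₀ := Submodule.span_eq D₀
    have hQ₁ : Q₁ = D₁ := Submodule.span_eq D₁
    have hle : Q₀ ≤ Submodule.comap (LinearMap.id : P.V →ₗ[ℚ] P.V) Q₁ := by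
      rw [hQ₀]
      intro v hv
      simp only [Submodule.mem_comap, LinearMap.id_coe, id_eq]
      rw [hQ₁]
      exact h01le hv
    set hmap : (P.V ⧸ Q₀) →ₗ[ℚ] P.V ⧸ Q₁ := Submodule.mapQ Q₀ Q₁ LinearMap.id hle with hhmap
    have hmapmk : ∀ v : P.V, hmap (Q₀.mkQ v) = Q₁.mkQ v := by
      intro v
      rw [hhmap]
      erw [Submodule.mapQ_apply]
    have key := myGen.le (R := ℚ) hmap (fun i => Q₀.mkQ (z i)) (fun j => Q₀.mkQ (w j))
      ?_ ?_ ?_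
    · -- translate key into ldim form
      have e1 : Set.range (fun i => Q₀.mkQ (z i)) = Q₀.mkQ '' Set.range z :=
        (Set.range_comp _ _).symm ▸ rfl
      have e2 : Set.range (fun j => Q₀.mkQ (w j)) = Q₀.mkQ '' Set.range w :=
        (Set.range_comp _ _).symm ▸ rfl
      have e3 : Set.range (hmap ∘ fun i => Q₀.mkQ (z i)) = Q₁.mkQ '' Set.range z := by
        have : (hmap ∘ fun i => Q₀.mkQ (z i)) = fun i => Q₁.mkQ (z i) := by
          funext i
          exact hmapmk (z i)
        rw [this]
        exact (Set.range_comp _ _).symm ▸ rfl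
      rw [myLdim.eq (R := ℚ) (Set.range z) (D₀ : Set P.V),
        myLdim.eq (R := ℚ) (Set.range w) (D₀ : Set P.V),
        myLdim.eq (R := ℚ) (Set.range z) (D₁ : Set P.V)]
      rw [e1, e2, e3] at key
      exact key
    · -- hw1
      intro j
      have h1 : Q₀.mkQ (w j) ∈ Submodule.map Q₀.mkQ U := Submodule.mem_map_of_mem (hwU j)
      rw [hU, Submodule.map_span] at h1
      rwa [show Q₀.mkQ '' Set.range z = Set.range (fun i => Q₀.mkQ (z i)) from
        (Set.range_comp _ _) ▸ rfl] at h1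
    · -- hw2
      intro j
      rw [hmapmk, Submodule.mkQ_apply, Submodule.Quotient.mk_eq_zero, hQ₁]
      exact hwD1 j
    · -- hw3
      intro x hx hx0
      have hx' : x ∈ Submodule.map Q₀.mkQ U := by
        rw [hU, Submodule.map_span]
        rwa [show Q₀.mkQ '' Set.range z = Set.range (fun i => Q₀.mkQ (z i)) from
          (Set.range_comp _ _) ▸ rfl]
      obtain ⟨u, huU, rfl⟩ := hx'
      rw [show Q₀.mkQ u = Q₀.mkQ u from rfl] at hx0
      rw [hmapmk, Submodule.mkQ_apply, Submodule.Quotient.mk_eq_zero, hQ₁] at hx0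
      have huM : u ∈ M := by
        rw [hM]
        exact Submodule.mem_inf.2 ⟨huU, hx0⟩
      rw [← hspanw] at huM
      have : Q₀.mkQ u ∈ Submodule.map Q₀.mkQ (span ℚ (Set.range w)) :=
        Submodule.mem_map_of_mem huM
      rw [Submodule.map_span] at this
      rwa [show Q₀.mkQ '' Set.range w = Set.range (fun j => Q₀.mkQ (w j)) from
        (Set.range_comp _ _) ▸ rfl] at this
  -- Inequality (III) over K
  have hIII : ldim K (Set.range w) (D₀ : Set P.V) + ldim K (Set.range z) (D₁ : Set P.V)
      ≤ ldim K (Set.range z) (D₀ : Set P.V) := by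
    set Q₀ : Submodule K P.V := span K (D₀ : Set P.V) with hQ₀'
    set Q₁ : Submodule K P.V := span K (D₁ : Set P.V) with hQ₁'
    have hle : Q₀ ≤ Submodule.comap (LinearMap.id : P.V →ₗ[K] P.V) Q₁ := by
      intro v hv
      simp only [Submodule.mem_comap, LinearMap.id_coe, id_eq]
      exact Submodule.span_mono (fun y hy => h01le hy) hv
    set hmap : (P.V ⧸ Q₀) →ₗ[K] P.V ⧸ Q₁ := Submodule.mapQ Q₀ Q₁ LinearMap.id hle with hhmap
    have hmapmk : ∀ v : P.V, hmap (Q₀.mkQ v) = Q₁.mkQ v := by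
      intro v
      rw [hhmap]
      erw [Submodule.mapQ_apply]
    have key := myGen.ge (R := K) hmap (fun i => Q₀.mkQ (z i)) (fun j => Q₀.mkQ (w j))
      ?_ ?_
    · have e3 : Set.range (hmap ∘ fun i => Q₀.mkQ (z i)) = Q₁.mkQ '' Set.range z := by
        have : (hmap ∘ fun i => Q₀.mkQ (z i)) = fun i => Q₁.mkQ (z i) := by
          funext i
          exact hmapmk (z i)
        rw [this]
        exact (Set.range_comp _ _).symm ▸ rfl
      rw [myLdim.eq (R := K) (Set.range z) (D₀ : Set P.V),
        myLdim.eq (R := K) (Set.range w) (D₀ : Set P.V),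
        myLdim.eq (R := K) (Set.range z) (D₁ : Set P.V)]
      rw [show Set.range (fun i => Q₀.mkQ (z i)) = Q₀.mkQ '' Set.range z from
        (Set.range_comp _ _).symm ▸ rfl,
        show Set.range (fun j => Q₀.mkQ (w j)) = Q₀.mkQ '' Set.range w from
        (Set.range_comp _ _).symm ▸ rfl, e3] at key
      exact key
    · -- hw1 : w j in span K of images
      intro j
      have hwK : w j ∈ span K (Set.range z) := myPPF.spanQK P _ (hwU j)
      have h1 : Q₀.mkQ (w j) ∈ Submodule.map Q₀.mkQ (span K (Set.range z)) :=
        Submodule.mem_map_of_mem hwK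
      rw [Submodule.map_span] at h1
      rwa [show Q₀.mkQ '' Set.range z = Set.range (fun i => Q₀.mkQ (z i)) from
        (Set.range_comp _ _) ▸ rfl] at h1
    · -- hw2
      intro j
      rw [hmapmk, Submodule.mkQ_apply, Submodule.Quotient.mk_eq_zero]
      exact Submodule.subset_span (hwD1 j)
  -- Inequality (II) for td
  have hII : td (P.exp '' Set.range w) (P.exp '' (D₀ : Set P.V))
      + td (P.exp '' Set.range z) (P.exp '' (D₁ : Set P.V))
      ≤ td (P.exp '' Set.range z) (P.exp '' (D₀ : Set P.V)) := by
    apply myTd.tower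
    · exact (Set.finite_range z).image _
    · exact (Set.finite_range w).image _
    · exact Set.image_mono (fun y hy => h01le hy)
    · exact Set.image_mono (Set.range_subset_iff.2 hwD1)
    · rintro y ⟨v, ⟨j, rfl⟩, rfl⟩
      rw [hexpw j]
      refine Subfield.prod_mem _ (fun i _ => ?_)
      refine zpow_mem ?_ _
      exact Subfield.subset_closure (Or.inr ⟨z i, ⟨i, rfl⟩, rfl⟩)
  -- numeric conclusion
  have hIVδ := h01δ d w hwD1
  have hVδ := h12δ n z hz
  unfold PPF.delta at hIVδ hVδ ⊢
  have c1 : ((ldim ℚ (Set.range z) (D₀ : Set P.V) : ℕ) : ℤ)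
      ≤ ((ldim ℚ (Set.range w) (D₀ : Set P.V) + ldim ℚ (Set.range z) (D₁ : Set P.V) : ℕ) : ℤ) :=
    Nat.cast_le.2 hI
  have c2 : ((td (P.exp '' Set.range w) (P.exp '' (D₀ : Set P.V))
      + td (P.exp '' Set.range z) (P.exp '' (D₁ : Set P.V)) : ℕ) : ℤ)
      ≤ ((td (P.exp '' Set.range z) (P.exp '' (D₀ : Set P.V)) : ℕ) : ℤ) := Nat.cast_le.2 hII
  have c3 : ((ldim K (Set.range w) (D₀ : Set P.V) + ldim K (Set.range z) (D₁ : Set P.V) : ℕ) : ℤ)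
      ≤ ((ldim K (Set.range z) (D₀ : Set P.V) : ℕ) : ℤ) := Nat.cast_le.2 hIII
  push_cast at c1 c2 c3
  linarith
end

section
/- Let F be an exponential field (a field of characteristic 0 with a group homomorphism exp from its additive to its multiplicative group), let K ⊆ F be a subfield, and let X ⊆ F. Then the K-powers hull of X is contained in the exponential hull of X ∪ K; i.e., any Q-subspace D containing X ∪ K which is exponentially strong in F (meaning δ^exp(z/D) = td(z, exp(z)/D, exp(D)) − ldim_Q(z/D) ≥ 0 for all finite tuples z) is also strong in the K-powered field sense (meaning δ^K(z/D) = ldim_K(z/D) + td(exp(z)/exp(D)) − ldim_Q(z/D) ≥ 0 for all finite tuples z). -/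
open Set Submodule

variable {K : Type} [Field K] [CharZero K]

lemma algindep_mono {R A : Type*} [CommRing R] [CommRing A] [Algebra R A]
    {S T : Subalgebra R A} (hST : S ≤ T) {ι : Type*} {x : ι → A}
    (hx : AlgebraicIndependent ↥T x) : AlgebraicIndependent ↥S x := by
  rw [algebraicIndependent_iff_injective_aeval] at hx ⊢
  have hcomp : (algebraMap ↥T A).comp (Subalgebra.inclusion hST).toRingHom
      = algebraMap ↥S A := by
    ext a
    simp [Subalgebra.algebraMap_eq]
  have hmap : ∀ r : MvPolynomial ι ↥S,
      MvPolynomial.aeval x (MvPolynomial.map (Subalgebra.inclusion hST).toRingHom r)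
        = MvPolynomial.aeval x r := by
    intro r
    rw [MvPolynomial.aeval_def, MvPolynomial.aeval_def, MvPolynomial.eval₂_map, hcomp]
  intro p q hpq
  have : MvPolynomial.map (Subalgebra.inclusion hST).toRingHom p
      = MvPolynomial.map (Subalgebra.inclusion hST).toRingHom q := by
    apply hx
    simp only [hmap]
    exact hpq
  exact MvPolynomial.map_injective _ (Subalgebra.inclusion_injective hST) this

lemma algindep_linear {R A : Type*} [CommRing R] [CommRing A] [Algebra R A]
    {ι : Type*} [DecidableEq ι] {x : ι → A} (hx : AlgebraicIndependent R x)
    (t : Finset ι) (c : ι → R) (r : R)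
    (h : ∑ i ∈ t, algebraMap R A (c i) * x i = algebraMap R A r) :
    ∀ i ∈ t, c i = 0 := by
  intro i hi
  set P : MvPolynomial ι R :=
    (∑ j ∈ t, MvPolynomial.C (c j) * MvPolynomial.X j) - MvPolynomial.C r with hPdef
  have hP : MvPolynomial.aeval x P = 0 := by
    simp only [hPdef, map_sub, map_sum, map_mul, MvPolynomial.aeval_C, MvPolynomial.aeval_X]
    rw [h]
    ring
  have hP0 : P = 0 := hx.eq_zero_of_aeval_eq_zero P hP
  have hco := congrArg (MvPolynomial.coeff (Finsupp.single i 1)) hP0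
  rw [hPdef] at hco
  simp only [MvPolynomial.coeff_sub, MvPolynomial.coeff_sum, MvPolynomial.coeff_C_mul,
    MvPolynomial.coeff_X', MvPolynomial.coeff_C, MvPolynomial.coeff_zero] at hco
  rw [Finset.sum_eq_single i (fun j _ hj => by
      rw [if_neg (fun hh => hj ((Finsupp.single_left_injective one_ne_zero) hh)), mul_zero])
    (fun h' => absurd hi h')] at hco
  rw [if_pos rfl, mul_one, if_neg (fun hh => one_ne_zero (Finsupp.single_eq_zero.mp hh.symm)),
    sub_zero] at hco
  exact hco

lemma card_le_ldim {R : Type*} [DivisionRing R] {V : Type*} [AddCommGroup V] [Module R V]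
    {n : ℕ} (z : Fin n → V) (B : Set V) {ι : Type*} [Fintype ι] (v : ι → V)
    (hv : ∀ i, v i ∈ Set.range z)
    (hind : ∀ (t : Finset ι) (g : ι → R), (∑ i ∈ t, g i • v i) ∈ span R B →
      ∀ i ∈ t, g i = 0) :
    Fintype.card ι ≤ ldim R (Set.range z) B := by
  classical
  set S : Submodule R V := span R (Set.range z ∪ B) with hS
  have memS : ∀ i, v i ∈ S := fun i => subset_span (Or.inl (hv i))
  have memSz : ∀ j : Fin n, z j ∈ S := fun j => subset_span (Or.inl ⟨j, rfl⟩)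
  set N : Submodule R ↥S := (span R B).comap S.subtype with hN
  set g : Fin n → ↥S ⧸ N := fun j => Submodule.Quotient.mk ⟨z j, memSz j⟩ with hg
  have hspan : span R (Set.range g) = ⊤ := by
    rw [eq_top_iff]
    rintro q -
    obtain ⟨x, rfl⟩ := Submodule.Quotient.mk_surjective N q
    obtain ⟨x, hx⟩ := x
    refine Submodule.span_induction
      (p := fun y hy => (Submodule.Quotient.mk ⟨y, hy⟩ : ↥S ⧸ N) ∈ span R (Set.range g))
      ?_ ?_ ?_ ?_ hx
    · rintro y (⟨j, rfl⟩ | hyB)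
      · exact subset_span ⟨j, rfl⟩
      · have hmemN : (⟨y, subset_span (Or.inr hyB)⟩ : ↥S) ∈ N := by
          simpa [hN] using subset_span (R := R) hyB
        rw [show (Submodule.Quotient.mk ⟨y, _⟩ : ↥S ⧸ N) = 0 from
          (Submodule.Quotient.mk_eq_zero N).mpr hmemN]
        exact zero_mem _
    · show (Submodule.Quotient.mk (⟨0, zero_mem S⟩ : ↥S) : ↥S ⧸ N) ∈ span R (Set.range g)
      have h0 : (Submodule.Quotient.mk (⟨0, zero_mem S⟩ : ↥S) : ↥S ⧸ N) = 0 := rfl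
      rw [h0]; exact zero_mem _
    · intro a b ha hb hpa hpb
      show (Submodule.Quotient.mk (⟨a + b, add_mem ha hb⟩ : ↥S) : ↥S ⧸ N) ∈ span R (Set.range g)
      have hab : (Submodule.Quotient.mk (⟨a + b, add_mem ha hb⟩ : ↥S) : ↥S ⧸ N)
          = Submodule.Quotient.mk ⟨a, ha⟩ + Submodule.Quotient.mk ⟨b, hb⟩ := rfl
      rw [hab]; exact add_mem hpa hpb
    · intro c a ha hpa
      show (Submodule.Quotient.mk (⟨c • a, smul_mem _ c ha⟩ : ↥S) : ↥S ⧸ N) ∈ span R (Set.range g)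
      have hca : (Submodule.Quotient.mk (⟨c • a, smul_mem _ c ha⟩ : ↥S) : ↥S ⧸ N)
          = c • Submodule.Quotient.mk ⟨a, ha⟩ := rfl
      rw [hca]; exact smul_mem _ c hpa
  haveI : Module.Finite R (↥S ⧸ N) := by
    have htop : (⊤ : Submodule R (↥S ⧸ N)).FG := by
      rw [← hspan]; exact Submodule.fg_span (Set.finite_range g)
    exact Module.finite_def.mpr htop
  set w : ι → ↥S ⧸ N := fun i => Submodule.Quotient.mk ⟨v i, memS i⟩ with hw
  have hli : LinearIndependent R w := by
    rw [linearIndependent_iff']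
    intro t c hsum
    have hmk : N.mkQ (∑ i ∈ t, c i • (⟨v i, memS i⟩ : ↥S)) = ∑ i ∈ t, c i • w i := by
      rw [map_sum]
      refine Finset.sum_congr rfl fun i _ => ?_
      rfl
    have hmem : (∑ i ∈ t, c i • (⟨v i, memS i⟩ : ↥S)) ∈ N := by
      rw [← Submodule.Quotient.mk_eq_zero]
      show N.mkQ _ = 0
      rw [hmk, hsum]
    have hsp : (∑ i ∈ t, c i • v i) ∈ span R B := by
      have h2 := Submodule.mem_comap.mp hmem
      simpa using h2
    exact hind t c hsp
  exact hli.fintype_card_le_finrank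

lemma bddAbove_aux {F : Type*} [Field F] [CharZero F] {W : Set F} (hW : W.Finite)
    (R : Subalgebra ℚ F) :
    BddAbove {m : ℕ | ∃ s : Fin m → F, (∀ i, s i ∈ W) ∧ AlgebraicIndependent ↥R s} := by
  classical
  haveI := hW.fintype
  refine ⟨hW.toFinset.card, ?_⟩
  rintro k ⟨u, hu, hindu⟩
  haveI : Nontrivial ↥R := ⟨0, 1, fun h => zero_ne_one (α := F) (congrArg Subtype.val h)⟩
  have hinj : Function.Injective u := hindu.injective
  calc k = Fintype.card (Fin k) := (Fintype.card_fin k).symm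
    _ ≤ hW.toFinset.card := by
        rw [← Fintype.card_coe]
        exact Fintype.card_le_of_injective
          (fun i => ⟨u i, hW.mem_toFinset.mpr (hu i)⟩)
          (fun a b h => hinj (congrArg Subtype.val h))

lemma le_td {F : Type*} [Field F] [CharZero F] {A B : Set F} (hA : A.Finite) {m : ℕ}
    (s : Fin m → F) (hs : ∀ i, s i ∈ A)
    (hind : AlgebraicIndependent ↥(Algebra.adjoin ℚ B) s) : m ≤ td A B :=
  le_csSup (bddAbove_aux hA _) ⟨s, hs, hind⟩

/-- **Hull inclusion** (Lemma `hullinclusion`): in an exponential field `F` with subfield `K`,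
any ℚ-subspace `D` containing `X ∪ K` which is exponentially strong in `F` is also strong in
the sense of K-powered fields: δ^K(z/D) ≥ 0 for all finite tuples `z`. -/
theorem hull_inclusion {F : Type} [Field F] [CharZero F] (expF : F → F)
    (hexp : ∀ x y : F, expF (x + y) = expF x * expF y)
    (Kf : IntermediateField ℚ F) (X : Set F) (D : Submodule ℚ F)
    (hX : X ⊆ (D : Set F)) (hK : (Kf : Set F) ⊆ (D : Set F))
    (hstrong : ∀ (n : ℕ) (z : Fin n → F),
      0 ≤ (td (Set.range z ∪ expF '' Set.range z) ((D : Set F) ∪ expF '' (D : Set F)) : ℤ) -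
        (ldim ℚ (Set.range z) (D : Set F) : ℤ)) :
    ∀ (n : ℕ) (z : Fin n → F),
      0 ≤ (ldim ↥Kf (Set.range z) (D : Set F) : ℤ) +
        (td (expF '' Set.range z) (expF '' (D : Set F)) : ℤ) -
        (ldim ℚ (Set.range z) (D : Set F) : ℤ) := by
    classical
  intro n z
  have key := hstrong n z
  -- Extract a maximal algebraically independent tuple witnessing T'
  have hWfin : (Set.range z ∪ expF '' Set.range z).Finite :=
    (Set.finite_range z).union ((Set.finite_range z).image _)
  have hne : {m : ℕ | ∃ s : Fin m → F, (∀ i, s i ∈ Set.range z ∪ expF '' Set.range z) ∧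
      AlgebraicIndependent ↥(Algebra.adjoin ℚ ((D : Set F) ∪ expF '' (D : Set F))) s}.Nonempty :=
    ⟨0, fun i => i.elim0, fun i => i.elim0,
      algebraicIndependent_empty_type_iff.mpr (fun a b h => Subtype.ext h)⟩
  have hbdd := bddAbove_aux hWfin (Algebra.adjoin ℚ ((D : Set F) ∪ expF '' (D : Set F)))
  have hTmem : td (Set.range z ∪ expF '' Set.range z) ((D : Set F) ∪ expF '' (D : Set F)) ∈
      {m : ℕ | ∃ s : Fin m → F, (∀ i, s i ∈ Set.range z ∪ expF '' Set.range z) ∧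
        AlgebraicIndependent ↥(Algebra.adjoin ℚ ((D : Set F) ∪ expF '' (D : Set F))) s} :=
    Nat.sSup_mem hne hbdd
  obtain ⟨s, hsmem, hsind⟩ := hTmem
  set I := Finset.univ.filter (fun i => s i ∈ Set.range z) with hI
  have hJ : ∀ i, i ∈ Iᶜ → s i ∈ expF '' Set.range z := by
    intro i hi
    refine (hsmem i).resolve_left ?_
    intro hin
    exact (Finset.mem_compl.mp hi) (Finset.mem_filter.mpr ⟨Finset.mem_univ i, hin⟩)
  have hIin : ∀ i : ↥I, s i ∈ Set.range z := by
    intro i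
    exact (Finset.mem_filter.mp i.2).2
  -- membership of span and adjoin
  have hKR : (Kf : Set F) ⊆ (Algebra.adjoin ℚ ((D : Set F) ∪ expF '' (D : Set F)) : Set F) :=
    fun x hx => Algebra.subset_adjoin (Or.inl (hK hx))
  have hspansub : ((span ↥Kf (D : Set F) : Submodule ↥Kf F) : Set F) ⊆
      (Algebra.adjoin ℚ ((D : Set F) ∪ expF '' (D : Set F)) : Set F) := by
    intro x hx
    refine Submodule.span_induction
      (p := fun y _ => y ∈ (Algebra.adjoin ℚ ((D : Set F) ∪ expF '' (D : Set F)) : Set F))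
      ?_ ?_ ?_ ?_ hx
    · intro y hy
      exact Algebra.subset_adjoin (Or.inl hy)
    · exact Subalgebra.zero_mem _
    · intro a b _ _ ha hb
      exact Subalgebra.add_mem _ ha hb
    · intro c a _ ha
      have hc : (c : F) ∈ Algebra.adjoin ℚ ((D : Set F) ∪ expF '' (D : Set F)) := hKR c.2
      show (c • a) ∈ Algebra.adjoin ℚ ((D : Set F) ∪ expF '' (D : Set F))
      rw [Algebra.smul_def, IntermediateField.algebraMap_apply]
      exact Subalgebra.mul_mem _ hc ha
  -- Bound 1: card I ≤ ldim K
  have hb1 : Fintype.card ↥I ≤ ldim ↥Kf (Set.range z) (D : Set F) := by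
    refine card_le_ldim z (D : Set F) (fun i : ↥I => s i) hIin ?_
    intro t g hsum i hi
    have hindep : AlgebraicIndependent
        ↥(Algebra.adjoin ℚ ((D : Set F) ∪ expF '' (D : Set F))) (fun i : ↥I => s i) :=
      hsind.comp Subtype.val Subtype.val_injective
    have hc : ∀ j : ↥I, (g j : F) ∈ Algebra.adjoin ℚ ((D : Set F) ∪ expF '' (D : Set F)) :=
      fun j => hKR (g j).2
    have hr : (∑ j ∈ t, g j • s j.1) ∈
        Algebra.adjoin ℚ ((D : Set F) ∪ expF '' (D : Set F)) := hspansub hsum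
    have heq : ∑ j ∈ t,
        algebraMap ↥(Algebra.adjoin ℚ ((D : Set F) ∪ expF '' (D : Set F))) F
          (⟨(g j : F), hc j⟩) * s j.1
        = algebraMap ↥(Algebra.adjoin ℚ ((D : Set F) ∪ expF '' (D : Set F))) F
          ⟨∑ j ∈ t, g j • s j.1, hr⟩ := by
      have halg : ∀ (y : F) (hy : y ∈ Algebra.adjoin ℚ ((D : Set F) ∪ expF '' (D : Set F))),
          algebraMap ↥(Algebra.adjoin ℚ ((D : Set F) ∪ expF '' (D : Set F))) F ⟨y, hy⟩ = y :=
        fun y hy => rfl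
      simp only [halg]
      refine Finset.sum_congr rfl fun j _ => ?_
      rw [Algebra.smul_def, IntermediateField.algebraMap_apply]
    have hzero := algindep_linear hindep t
      (fun j => ⟨(g j : F), hc j⟩) ⟨∑ j ∈ t, g j • s j.1, hr⟩ heq i hi
    have : (g i : F) = 0 := congrArg Subtype.val hzero
    exact_mod_cast this
  -- Bound 2: card J ≤ td (exp z / exp D)
  have hb2 : Fintype.card ↥(Iᶜ) ≤ td (expF '' Set.range z) (expF '' (D : Set F)) := by
    have hmono : AlgebraicIndependent ↥(Algebra.adjoin ℚ (expF '' (D : Set F))) s :=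
      algindep_mono (Algebra.adjoin_mono subset_union_right) hsind
    have hcomp : AlgebraicIndependent ↥(Algebra.adjoin ℚ (expF '' (D : Set F)))
        (fun i : ↥(Iᶜ) => s i) := hmono.comp Subtype.val Subtype.val_injective
    have e := Fintype.equivFin ↥(Iᶜ)
    refine le_td ((Set.finite_range z).image _) (fun k => s (e.symm k)) ?_ ?_
    · intro k
      exact hJ _ (e.symm k).2
    · exact hcomp.comp e.symm e.symm.injective
  -- Combine
  have hcards : I.card + Iᶜ.card =
      td (Set.range z ∪ expF '' Set.range z) ((D : Set F) ∪ expF '' (D : Set F)) := by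
    rw [Finset.card_add_card_compl]
    simp
  rw [Fintype.card_coe] at hb1
  rw [Fintype.card_coe] at hb2
  omega
end

section
/- (Ziegler's lemma, vector space version) Let K be a field, V a K-vector space, V' ≤ V a subspace, and v₁, v₂, v₃ ∈ Vⁿ with v₁ + v₂ + v₃ = 0. Suppose that for all i ≠ j in {1,2,3}, ldim_K(v_i / V' ∪ v_j) = ldim_K(v_i / V'). Then there is a K-linear subspace L ≤ Vⁿ such that each v_i is a generic point of a V'-coset of L; in particular ldim_K(v_i / V') = dim L for i = 1, 2, 3. -/
open Set Submodule

variable {K : Type} [Field K] [CharZero K]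

open Module LinearMap

variable {Kf : Type} [Field Kf] {V : Type} [AddCommGroup V] [Module Kf V]

noncomputable def gmap (B : Set V) {n : ℕ} (v : Fin n → V) : (Fin n → Kf) →ₗ[Kf] V ⧸ span Kf B :=
  (span Kf B).mkQ ∘ₗ Fintype.linearCombination Kf v

lemma mem_ker_gmap {B : Set V} {n : ℕ} {v : Fin n → V} (a : Fin n → Kf) :
    a ∈ LinearMap.ker (gmap B v) ↔ ∑ j, a j • v j ∈ span Kf B := by
  simp only [gmap, LinearMap.mem_ker, comp_apply, mkQ_apply, Submodule.Quotient.mk_eq_zero,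
    Fintype.linearCombination_apply]

lemma ldim_eq_finrank_range (B : Set V) {n : ℕ} (v : Fin n → V) :
    ldim Kf (Set.range v) B = finrank Kf (LinearMap.range (gmap (Kf := Kf) B v)) := by
  set A := Set.range v
  set f : ↥(span Kf (A ∪ B)) →ₗ[Kf] V ⧸ span Kf B := (span Kf B).mkQ ∘ₗ (span Kf (A ∪ B)).subtype
  have hker : LinearMap.ker f = (span Kf B).comap (span Kf (A ∪ B)).subtype := by
    ext x
    simp [f, Submodule.Quotient.mk_eq_zero]
  have hrange : LinearMap.range f = LinearMap.range (gmap (Kf := Kf) B v) := by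
    rw [LinearMap.range_comp, range_subtype]
    rw [gmap, LinearMap.range_comp, Fintype.range_linearCombination]
    rw [span_union, Submodule.map_sup]
    have hb : Submodule.map (span Kf B).mkQ (span Kf B) = ⊥ := by
      rw [eq_bot_iff, Submodule.map_le_iff_le_comap, Submodule.comap_bot, Submodule.ker_mkQ]
    rw [hb, sup_bot_eq]
  have e := f.quotKerEquivRange
  rw [hker, hrange] at e
  exact e.finrank_eq

lemma ldim_add_finrank_ker (B : Set V) {n : ℕ} (v : Fin n → V) :
    ldim Kf (Set.range v) B + finrank Kf (LinearMap.ker (gmap (Kf := Kf) B v)) = n := by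
  rw [ldim_eq_finrank_range]
  have := (gmap (Kf := Kf) B v).finrank_range_add_finrank_ker
  simpa using this

/-- The relation space of the tuple `v` over `V'`. -/
noncomputable def relSp (V' : Submodule Kf V) {n : ℕ} (v : Fin n → V) :
    Submodule Kf (Fin n → Kf) :=
  LinearMap.ker (gmap (Kf := Kf) (V' : Set V) v)

lemma mem_relSp {V' : Submodule Kf V} {n : ℕ} {v : Fin n → V} (a : Fin n → Kf) :
    a ∈ relSp V' v ↔ ∑ j, a j • v j ∈ V' := by
  rw [relSp, mem_ker_gmap, Submodule.span_eq]

lemma ldim_add_finrank_relSp (V' : Submodule Kf V) {n : ℕ} (v : Fin n → V) :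
    ldim Kf (Set.range v) (V' : Set V) + finrank Kf (relSp V' v) = n :=
  ldim_add_finrank_ker _ _

/-- **Ziegler's lemma, vector space version.**  If v₁ + v₂ + v₃ = 0 in Vⁿ and each vᵢ is
linearly independent from vⱼ over V' (i ≠ j), then there is a K-linear subspace L of Vⁿ
(cut out by a matrix M over K) such that each vᵢ is a generic point of a V'-coset of L;
in particular ldim_K(vᵢ/V') = dim L = n − rk M for each i. -/
theorem ziegler_vector_space {Kf : Type} [Field Kf] {V : Type} [AddCommGroup V] [Module Kf V]
    (V' : Submodule Kf V) (n : ℕ) (v : Fin 3 → Fin n → V)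
    (hsum : ∀ j, v 0 j + v 1 j + v 2 j = 0)
    (hind : ∀ t t' : Fin 3, t ≠ t' →
      ldim Kf (Set.range (v t)) ((V' : Set V) ∪ Set.range (v t')) =
        ldim Kf (Set.range (v t)) (V' : Set V)) :
    ∃ (k : ℕ) (M : Matrix (Fin k) (Fin n) Kf) (c : Fin 3 → Fin n → V),
      (∀ t j, c t j ∈ V') ∧
      (∀ t i, ∑ j, M i j • v t j = ∑ j, M i j • c t j) ∧
      (∀ t, ldim Kf (Set.range (v t)) (V' : Set V) = n - M.rank) := by
  classical
  -- Step 1: closure under extended base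
  have hRel' : ∀ t t' : Fin 3, t ≠ t' → ∀ a : Fin n → Kf,
      (∑ j, a j • v t j ∈ span Kf ((V' : Set V) ∪ Set.range (v t'))) → a ∈ relSp V' (v t) := by
    intro t t' htt' a ha
    have h1 := ldim_add_finrank_ker (Kf := Kf) ((V' : Set V) ∪ Set.range (v t')) (v t)
    have h2 := ldim_add_finrank_relSp V' (v t)
    have h3 := hind t t' htt'
    have hle : relSp V' (v t) ≤ LinearMap.ker (gmap (Kf := Kf) ((V' : Set V) ∪ Set.range (v t')) (v t)) := by
      intro x hx
      rw [mem_relSp] at hx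
      rw [mem_ker_gmap]
      have hsub : span Kf (V' : Set V) ≤ span Kf ((V' : Set V) ∪ Set.range (v t')) :=
        span_mono Set.subset_union_left
      exact hsub (by rw [Submodule.span_eq]; exact hx)
    have heq : relSp V' (v t) =
        LinearMap.ker (gmap (Kf := Kf) ((V' : Set V) ∪ Set.range (v t')) (v t)) :=
      Submodule.eq_of_le_of_finrank_eq hle (by omega)
    rw [heq, mem_ker_gmap]
    exact ha
  -- Step 2: permuted sum
  have hperm : ∀ t t' t'' : Fin 3, t ≠ t' → t ≠ t'' → t' ≠ t'' →
      ∀ j, v t j + v t' j + v t'' j = 0 := by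
    intro t t' t'' h1 h2 h3 j
    have h := hsum j
    fin_cases t <;> fin_cases t' <;> fin_cases t'' <;>
      first
        | exact absurd rfl (by assumption)
        | exact h
        | (rw [← h]; simp only [Fin.reduceFinMk, Fin.isValue]; abel)
  -- Step 3: relation spaces coincide
  have hTrans : ∀ t t' t'' : Fin 3, t ≠ t' → t ≠ t'' → t' ≠ t'' →
      relSp V' (v t') ≤ relSp V' (v t) := by
    intro t t' t'' h1 h2 h3 a ha
    have hY : ∑ j, a j • v t' j ∈ span Kf ((V' : Set V) ∪ Set.range (v t'')) :=
      subset_span (Or.inl ((mem_relSp a).mp ha))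
    have hZ : ∑ j, a j • v t'' j ∈ span Kf ((V' : Set V) ∪ Set.range (v t'')) :=
      sum_mem fun j _ => smul_mem _ _ (subset_span (Or.inr ⟨j, rfl⟩))
    have hz : (∑ j, a j • v t j) + (∑ j, a j • v t' j) + (∑ j, a j • v t'' j) = 0 := by
      rw [← Finset.sum_add_distrib, ← Finset.sum_add_distrib]
      refine Finset.sum_eq_zero fun j _ => ?_
      rw [← smul_add, ← smul_add, hperm t t' t'' h1 h2 h3 j, smul_zero]
    have hx : (∑ j, a j • v t j) =
        -(∑ j, a j • v t'' j) - (∑ j, a j • v t' j) :=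
      eq_sub_of_add_eq (eq_neg_of_add_eq_zero_left hz)
    exact hRel' t t'' h2 a (by rw [hx]; exact sub_mem (neg_mem hZ) hY)
  have e01 : relSp V' (v 0) = relSp V' (v 1) :=
    le_antisymm (hTrans 1 0 2 (by decide) (by decide) (by decide))
      (hTrans 0 1 2 (by decide) (by decide) (by decide))
  have e02 : relSp V' (v 0) = relSp V' (v 2) :=
    le_antisymm (hTrans 2 0 1 (by decide) (by decide) (by decide))
      (hTrans 0 2 1 (by decide) (by decide) (by decide))
  have hReq : ∀ t, relSp V' (v t) = relSp V' (v 0) := by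
    intro t
    fin_cases t
    · rfl
    · exact e01.symm
    · exact e02.symm
  -- Step 4: the matrix
  set R0 := relSp V' (v 0) with hR0
  set k := finrank Kf R0 with hk
  let b : Basis (Fin k) Kf R0 := Module.finBasis Kf R0
  set M : Matrix (Fin k) (Fin n) Kf := Matrix.of fun i j => (b i : Fin n → Kf) j with hM
  have hMl : M.transpose.mulVecLin = Fintype.linearCombination Kf (fun i => ((b i : Fin n → Kf))) := by
    apply LinearMap.ext; intro x; funext j
    simp [hM, Matrix.mulVecLin_apply, Matrix.mulVec, Matrix.vecMul, dotProduct,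
      Fintype.linearCombination_apply, Finset.sum_apply, mul_comm]
  have hrangeT : LinearMap.range M.transpose.mulVecLin = R0 := by
    rw [hMl, Fintype.range_linearCombination]
    have hre : Set.range (fun i => ((b i : Fin n → Kf))) = R0.subtype '' (Set.range b) := by
      rw [← Set.range_comp]; rfl
    rw [hre, ← Submodule.map_span, b.span_eq, Submodule.map_top, Submodule.range_subtype]
  have hrank : M.rank = k := by
    rw [← Matrix.rank_transpose, Matrix.rank, hrangeT]
  have hrangeM : LinearMap.range M.mulVecLin = ⊤ := by
    apply Submodule.eq_top_of_finrank_eq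
    rw [Module.finrank_fin_fun]
    exact hrank
  have hsurj : ∀ y : Fin k → Kf, ∃ x, M.mulVec x = y := by
    intro y
    obtain ⟨x, hx⟩ := LinearMap.range_eq_top.mp hrangeM y
    exact ⟨x, by rw [← Matrix.mulVecLin_apply, hx]⟩
  choose N hN using fun i => hsurj (Pi.single i 1)
  -- Step 5: the coset representatives
  have hw : ∀ t i, (∑ j, M i j • v t j) ∈ V' := by
    intro t i
    have hbi : (b i : Fin n → Kf) ∈ relSp V' (v t) := by
      rw [hReq t]; exact (b i).2
    rw [mem_relSp] at hbi
    exact hbi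
  refine ⟨k, M, fun t j => ∑ i, N i j • (∑ j', M i j' • v t j'), ?_, ?_, ?_⟩
  · intro t j
    exact sum_mem fun i _ => Submodule.smul_mem _ _ (hw t i)
  · intro t i'
    symm
    calc ∑ j, M i' j • ∑ i, N i j • (∑ j', M i j' • v t j')
        = ∑ j, ∑ i, (M i' j * N i j) • (∑ j', M i j' • v t j') := by
          refine Finset.sum_congr rfl fun j _ => ?_
          rw [Finset.smul_sum]
          refine Finset.sum_congr rfl fun i _ => ?_
          rw [smul_smul]
      _ = ∑ i, (∑ j, M i' j * N i j) • (∑ j', M i j' • v t j') := by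
          rw [Finset.sum_comm]
          refine Finset.sum_congr rfl fun i _ => ?_
          rw [Finset.sum_smul]
      _ = ∑ i, ((if i' = i then (1:Kf) else 0)) • (∑ j', M i j' • v t j') := by
          refine Finset.sum_congr rfl fun i _ => ?_
          have h5 : (∑ j, M i' j * N i j) = (if i' = i then (1:Kf) else 0) := by
            have h4 := congrFun (hN i) i'
            simpa [Matrix.mulVec, dotProduct, Pi.single_apply] using h4
          rw [h5]
      _ = ∑ j', M i' j' • v t j' := by
          simp
  · intro t
    have h1 := ldim_add_finrank_relSp V' (v t)
    rw [hReq t] at h1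
    rw [hrank]
    omega
end
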